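/- arXiv:2001.02326 — 5 statements merged into one kernel-verified Lean document; each statement's English description precedes it below -/
import Mathlib

section
/- Let f : ℝ → ℝ be continuous, nonnegative, integrable, with ‖f‖_{L¹} > 0. Suppose there exists x₁ ∈ ℝ such that min_{t∈[0,1]} [f(x₁−t) + f(x₁+t)] > (2/‖f‖_{L¹})·min_{t∈[0,1]} ∫_ℝ f(x) f(x+t) dx. Then f does not maximize the functional F(f) = (min_{t∈[0,1]} ∫_ℝ f(x)f(x+t) dx)/‖f‖_{L¹}²: there exists a nonnegative integrable g with F(g) > F(f). -/
open MeasureTheory Set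

theorem not_maximizer_of_first_condition_fails (f : ℝ → ℝ)
    (hcont : Continuous f) (hf : Integrable f) (hpos : ∀ x, 0 ≤ f x)
    (hnorm : 0 < ∫ x, f x)
    (x₁ : ℝ)
    (hx₁ : (2 / ∫ x, f x) * sInf ((fun t => ∫ x, f x * f (x + t)) '' Icc (0:ℝ) 1)
        < sInf ((fun t => f (x₁ - t) + f (x₁ + t)) '' Icc (0:ℝ) 1)) :
    ∃ g : ℝ → ℝ, Integrable g ∧ (∀ x, 0 ≤ g x) ∧
      sInf ((fun t => ∫ x, f x * f (x + t)) '' Icc (0:ℝ) 1) / (∫ x, f x)^2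
        < sInf ((fun t => ∫ x, g x * g (x + t)) '' Icc (0:ℝ) 1) / (∫ x, g x)^2 := by
  by_cases hcase : ∀ t ∈ Icc (0:ℝ) 1, Integrable (fun x => f x * f (x + t))
  case pos =>
      set N := ∫ x, f x with hN
      set A : ℝ → ℝ := fun t => ∫ x, f x * f (x + t) with hA
      set I := sInf (A '' Icc (0:ℝ) 1) with hIdef
      set m := sInf ((fun t => f (x₁ - t) + f (x₁ + t)) '' Icc (0:ℝ) 1) with hmdef
      have hA0 : ∀ t, 0 ≤ A t := fun t => integral_nonneg fun x => mul_nonneg (hpos x) (hpos _)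
      have hAbdd : BddBelow (A '' Icc (0:ℝ) 1) := ⟨0, by rintro b ⟨t, _, rfl⟩; exact hA0 t⟩
      have hne : (A '' Icc (0:ℝ) 1).Nonempty := ⟨A 0, mem_image_of_mem _ (by norm_num)⟩
      have hI0 : 0 ≤ I := le_csInf hne (by rintro b ⟨t, _, rfl⟩; exact hA0 t)
      have hImem : ∀ t ∈ Icc (0:ℝ) 1, I ≤ A t := fun t ht => csInf_le hAbdd (mem_image_of_mem _ ht)
      have hmle : ∀ t ∈ Icc (0:ℝ) 1, m ≤ f (x₁ - t) + f (x₁ + t) := fun t ht =>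
        csInf_le ⟨0, by rintro b ⟨s, _, rfl⟩; exact add_nonneg (hpos _) (hpos _)⟩
          (mem_image_of_mem _ ht)
      set c := (2 / N * I + m) / 2 with hcdef
      have hc1 : 2 / N * I < c := by rw [hcdef]; linarith
      have hc2 : c < m := by rw [hcdef]; linarith
      -- tube lemma to find r
      have hφ : Continuous (fun p : ℝ × ℝ => f (p.1 - p.2) + f (p.1 + p.2)) := by fun_prop
      have hopen : IsOpen {p : ℝ × ℝ | c < f (p.1 - p.2) + f (p.1 + p.2)} :=
        isOpen_lt continuous_const hφ
      have hsub : ({x₁} ×ˢ Icc (0:ℝ) 1) ⊆ {p : ℝ × ℝ | c < f (p.1 - p.2) + f (p.1 + p.2)} := by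
        rintro ⟨y, t⟩ ⟨hy, ht⟩
        simp only [mem_singleton_iff] at hy
        subst hy
        exact lt_of_lt_of_le hc2 (hmle t ht)
      obtain ⟨u, v, hu, _, hx₁u, hIv, huv⟩ :=
        generalized_tube_lemma isCompact_singleton isCompact_Icc hopen hsub
      obtain ⟨δ, hδ, hball⟩ := Metric.isOpen_iff.1 hu x₁ (hx₁u rfl)
      set r := δ / 2 with hrdef
      have hrpos : 0 < r := by rw [hrdef]; linarith
      have hkey : ∀ y ∈ Icc (x₁ - r) (x₁ + r), ∀ t ∈ Icc (0:ℝ) 1,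
          c < f (y - t) + f (y + t) := by
        intro y hy t ht
        obtain ⟨hy1, hy2⟩ := hy
        have hyu : y ∈ u := hball (by
          rw [Metric.mem_ball, Real.dist_eq, abs_lt]
          constructor <;> [linarith; linarith])
        exact huv (mk_mem_prod hyu (hIv ht))
      -- the bump function
      set h : ℝ → ℝ := indicator (Icc (x₁ - r) (x₁ + r)) (fun _ => (2 * r)⁻¹) with hhdef
      have hh0 : ∀ x, 0 ≤ h x := fun x => indicator_nonneg (fun _ _ => by positivity) x
      have hhmeas : Measurable h := measurable_const.indicator measurableSet_Icc
      have hhbd : ∀ x, ‖h x‖ ≤ (2 * r)⁻¹ := by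
        intro x
        rw [hhdef, Real.norm_eq_abs]
        by_cases hx : x ∈ Icc (x₁ - r) (x₁ + r)
        · rw [indicator_of_mem hx, abs_of_nonneg (by positivity)]
        · rw [indicator_of_notMem hx, abs_zero]; positivity
      have hhint : Integrable h := by
        rw [hhdef, integrable_indicator_iff measurableSet_Icc]
        exact integrableOn_const measure_Icc_lt_top.ne
      have hhint1 : ∫ x, h x = 1 := by
        rw [hhdef, integral_indicator_const _ measurableSet_Icc, measureReal_def, Real.volume_Icc, smul_eq_mul,
          ENNReal.toReal_ofReal (by linarith)]
        field_simp
        ring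
      -- choose ε
      set D := c * N ^ 2 - 2 * N * I with hDdef
      have hD : 0 < D := by
        have h1 : (2 / N * I) * N ^ 2 < c * N ^ 2 :=
          mul_lt_mul_of_pos_right hc1 (by positivity)
        have h2 : (2 / N * I) * N ^ 2 = 2 * N * I := by field_simp
        rw [hDdef]; linarith [h2 ▸ h1]
      set ε := min 1 (D / (2 * (I + 1))) with hεdef
      have hε : 0 < ε := lt_min one_pos (by positivity)
      have hεI : ε * I < D := by
        have h1 : ε * I ≤ D / (2 * (I + 1)) * I :=
          mul_le_mul_of_nonneg_right (min_le_right _ _) hI0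
        have h2 : D / (2 * (I + 1)) * I < D := by
          rw [div_mul_eq_mul_div, div_lt_iff₀ (by positivity)]
          nlinarith
        linarith
      -- the perturbed function
      refine ⟨fun x => f x + ε * h x, hf.add (hhint.const_mul ε),
        fun x => add_nonneg (hpos x) (mul_nonneg hε.le (hh0 x)), ?_⟩
      have hgN : ∫ x, (f x + ε * h x) = N + ε := by
        rw [integral_add hf (hhint.const_mul ε), integral_const_mul, hhint1]
        ring
      -- lower bound each autocorrelation value of g
      have hglb : ∀ t ∈ Icc (0:ℝ) 1,
          I + ε * c ≤ ∫ x, (f x + ε * h x) * (f (x + t) + ε * h (x + t)) := by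
        intro t ht
        have hft := hcase t ht
        have hht : Integrable (fun x => h (x + t)) := hhint.comp_add_right t
        have i2 : Integrable (fun x => f x * h (x + t)) := by
          have : Integrable (fun x => h (x + t) * f x) :=
            hf.bdd_mul ((hhmeas.comp (measurable_add_const t)).aestronglyMeasurable)
              (Filter.Eventually.of_forall fun x => hhbd _)
          simpa [mul_comm] using this
        have i3 : Integrable (fun x => h x * f (x + t)) :=
          (hf.comp_add_right t).bdd_mul hhmeas.aestronglyMeasurable (Filter.Eventually.of_forall fun x => hhbd x)
        have i3' : Integrable (fun x => h x * f (x - t)) :=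
          (hf.comp_sub_right t).bdd_mul hhmeas.aestronglyMeasurable (Filter.Eventually.of_forall fun x => hhbd x)
        have i4 : Integrable (fun x => h x * h (x + t)) :=
          hht.bdd_mul hhmeas.aestronglyMeasurable (Filter.Eventually.of_forall fun x => hhbd x)
        have expand : (fun x => (f x + ε * h x) * (f (x + t) + ε * h (x + t)))
            = fun x => f x * f (x + t) + (ε * (f x * h (x + t)) + (ε * (h x * f (x + t))
                + ε ^ 2 * (h x * h (x + t)))) := by
          funext x; ring
        have i34 : Integrable (fun x => ε * (h x * f (x + t)) + ε ^ 2 * (h x * h (x + t))) :=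
          (i3.const_mul ε).add (i4.const_mul (ε ^ 2))
        have i234 : Integrable (fun x => ε * (f x * h (x + t)) + (ε * (h x * f (x + t))
            + ε ^ 2 * (h x * h (x + t)))) := (i2.const_mul ε).add i34
        have e3 : ∫ x, (ε * (h x * f (x + t)) + ε ^ 2 * (h x * h (x + t)))
            = ε * (∫ x, h x * f (x + t)) + ε ^ 2 * ∫ x, h x * h (x + t) := by
          rw [integral_add (i3.const_mul ε) (i4.const_mul (ε ^ 2)), integral_const_mul,
            integral_const_mul]
        have e2 : ∫ x, (ε * (f x * h (x + t)) + (ε * (h x * f (x + t))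
            + ε ^ 2 * (h x * h (x + t))))
            = ε * (∫ x, f x * h (x + t)) + (ε * (∫ x, h x * f (x + t))
                + ε ^ 2 * ∫ x, h x * h (x + t)) := by
          rw [integral_add (i2.const_mul ε) i34, integral_const_mul, e3]
        have hgint_t : ∫ x, (f x + ε * h x) * (f (x + t) + ε * h (x + t))
            = A t + (ε * (∫ x, f x * h (x + t)) + (ε * (∫ x, h x * f (x + t))
                + ε ^ 2 * ∫ x, h x * h (x + t))) := by
          rw [expand, integral_add hft i234, e2]
        have shift : ∫ x, f x * h (x + t) = ∫ y, h y * f (y - t) := by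
          have := integral_add_right_eq_self (μ := volume) (fun y => h y * f (y - t)) t
          simp only [add_sub_cancel_right] at this
          rw [← this]
          congr 1
          funext x
          ring
        have cross : c ≤ (∫ x, f x * h (x + t)) + ∫ x, h x * f (x + t) := by
          rw [shift, ← integral_add i3' i3]
          calc c = (∫ y, h y) * c := by rw [hhint1, one_mul]
            _ = ∫ y, h y * c := (integral_mul_const c h).symm
            _ ≤ ∫ y, (h y * f (y - t) + h y * f (y + t)) := by
                apply integral_mono (hhint.mul_const c) (i3'.add i3)
                intro y
                simp only [Pi.add_apply]
                by_cases hy : y ∈ Icc (x₁ - r) (x₁ + r)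
                · have hcy := hkey y hy t ht
                  have h2 : h y * c ≤ h y * (f (y - t) + f (y + t)) :=
                    mul_le_mul_of_nonneg_left hcy.le (hh0 y)
                  nlinarith [h2]
                · have hy0 : h y = 0 := by rw [hhdef]; exact indicator_of_notMem hy _
                  rw [hy0]
                  simp
        have hq : 0 ≤ ∫ x, h x * h (x + t) :=
          integral_nonneg fun x => mul_nonneg (hh0 x) (hh0 _)
        rw [hgint_t]
        have hit := hImem t ht
        have h5 : ε * c ≤ ε * ((∫ x, f x * h (x + t)) + ∫ x, h x * f (x + t)) :=
          mul_le_mul_of_nonneg_left cross hε.le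
        rw [mul_add] at h5
        have h6 : 0 ≤ ε ^ 2 * ∫ x, h x * h (x + t) := mul_nonneg (sq_nonneg ε) hq
        linarith
      -- conclude
      have hsg : I + ε * c ≤ sInf ((fun t => ∫ x, (f x + ε * h x) * (f (x + t) + ε * h (x + t)))
          '' Icc (0:ℝ) 1) := by
        apply le_csInf ⟨_, mem_image_of_mem _ (show (0:ℝ) ∈ Icc (0:ℝ) 1 by norm_num)⟩
        rintro b ⟨t, ht, rfl⟩
        exact hglb t ht
      rw [hgN]
      have hstep : I / N ^ 2 < (I + ε * c) / (N + ε) ^ 2 := by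
        rw [div_lt_div_iff₀ (by positivity) (by positivity)]
        nlinarith [mul_lt_mul_of_pos_left hεI hε, hε, hD]
      exact lt_of_lt_of_le hstep (by gcongr)
  case neg =>
    push_neg at hcase
    obtain ⟨t₀, ht₀, hnint⟩ := hcase
    have hI : sInf ((fun t => ∫ x, f x * f (x + t)) '' Icc (0:ℝ) 1) ≤ 0 := by
      apply csInf_le ⟨0, by
        rintro b ⟨t, _, rfl⟩
        exact integral_nonneg fun x => mul_nonneg (hpos x) (hpos _)⟩
      exact ⟨t₀, ht₀, integral_undef hnint⟩
    set g₀ : ℝ → ℝ := indicator (Icc (0:ℝ) 2) (fun _ => (1:ℝ)) with hg₀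
    have hg₀int : Integrable g₀ := by
      rw [hg₀, integrable_indicator_iff measurableSet_Icc]
      exact integrableOn_const measure_Icc_lt_top.ne
    have hg₀pos : ∀ x, 0 ≤ g₀ x := fun x => indicator_nonneg (fun _ _ => zero_le_one) x
    have hg₀int' : ∫ x, g₀ x = 2 := by
      rw [hg₀, integral_indicator_const (1:ℝ) measurableSet_Icc]
      simp [Real.volume_Icc]
    have hval : ∀ t ∈ Icc (0:ℝ) 1, ∫ x, g₀ x * g₀ (x + t) = 2 - t := by
      intro t ht
      obtain ⟨ht0, ht1⟩ := ht
      have key : (fun x => g₀ x * g₀ (x + t)) = indicator (Icc (0:ℝ) (2-t)) (fun _ => (1:ℝ)) := by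
        funext x
        by_cases hx : x ∈ Icc (0:ℝ) (2-t)
        · obtain ⟨h1, h2⟩ := hx
          rw [indicator_of_mem (by constructor <;> linarith) (fun _ => (1:ℝ))]
          rw [hg₀]
          rw [indicator_of_mem (by exact ⟨by linarith, by linarith⟩),
            indicator_of_mem (by exact ⟨by linarith, by linarith⟩)]
          ring
        · rw [indicator_of_notMem hx]
          rw [mem_Icc, not_and_or] at hx
          rcases hx with hx | hx
          · push_neg at hx
            rw [hg₀, indicator_of_notMem (by rw [mem_Icc]; push_neg; intro h; linarith)]
            ring
          · push_neg at hx
            rw [hg₀, indicator_of_notMem (show x + t ∉ Icc (0:ℝ) 2 by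
                rw [mem_Icc]; push_neg; intro h; linarith)]
            ring
      rw [key, integral_indicator_const (1:ℝ) measurableSet_Icc, measureReal_def, Real.volume_Icc,
        smul_eq_mul, mul_one, ENNReal.toReal_ofReal (by linarith)]
      ring
    refine ⟨g₀, hg₀int, hg₀pos, ?_⟩
    have h1 : (1:ℝ) ≤ sInf ((fun t => ∫ x, g₀ x * g₀ (x + t)) '' Icc (0:ℝ) 1) := by
      apply le_csInf ⟨_, mem_image_of_mem _ (show (0:ℝ) ∈ Icc (0:ℝ) 1 by norm_num)⟩
      rintro b ⟨t, ht, rfl⟩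
      dsimp only
      rw [hval t ht]
      obtain ⟨_, ht1⟩ := ht
      linarith
    rw [hg₀int']
    have : sInf ((fun t => ∫ x, f x * f (x + t)) '' Icc (0:ℝ) 1) / (∫ x, f x)^2 ≤ 0 :=
      div_nonpos_of_nonpos_of_nonneg hI (by positivity)
    calc sInf ((fun t => ∫ x, f x * f (x + t)) '' Icc (0:ℝ) 1) / (∫ x, f x)^2 ≤ 0 := this
      _ < 1/4 := by norm_num
      _ ≤ _ := by rw [show ((2:ℝ))^2 = 4 by norm_num]; linarith
end

section
/- Let f : ℝ → ℝ be continuous, nonnegative, integrable, with ‖f‖_{L¹} > 0. Suppose there exist x₁ ∈ ℝ and x₂ in the support of f with x₁ ≠ x₂ such that min_{t∈[0,1]} [f(x₁−t) + f(x₁+t)] > max_{t∈[0,1]} [f(x₂−t) + f(x₂+t)]. Then f does not maximize F(f) = (min_{t∈[0,1]} ∫_ℝ f(x)f(x+t) dx)/‖f‖_{L¹}²: there exists a nonnegative integrable h with ‖h‖_{L¹} = ‖f‖_{L¹} and min_{t∈[0,1]} ∫ h(x)h(x+t) dx > min_{t∈[0,1]} ∫ f(x)f(x+t) dx. -/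
open MeasureTheory Set

lemma gaussian_aux_bp (M : ℝ) (hM : 0 < M) : ∃ h : ℝ → ℝ, Integrable h ∧ (∀ x, 0 ≤ h x) ∧
    (∫ x, h x) = M ∧ ∃ c > 0, ∀ t ∈ Icc (0:ℝ) 1, c ≤ ∫ x, h x * h (x + t) := by
  set C := M / Real.sqrt Real.pi with hC
  have hπ : 0 < Real.sqrt Real.pi := Real.sqrt_pos.2 Real.pi_pos
  have hCpos : 0 < C := div_pos hM hπ
  have hexp : Integrable (fun x : ℝ => Real.exp (-x^2)) := by
    simpa using integrable_exp_neg_mul_sq (one_pos)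
  set h : ℝ → ℝ := fun x => C * Real.exp (-x^2) with hh
  have hint : Integrable h := hexp.const_mul C
  have hnn : ∀ x, 0 ≤ h x := fun x => le_of_lt (by positivity)
  have hmeas : AEStronglyMeasurable h volume := hint.aestronglyMeasurable
  refine ⟨h, hint, hnn, ?_, C^2 * Real.exp (-5), by positivity, ?_⟩
  · have hg : (∫ x : ℝ, Real.exp (-x^2)) = Real.sqrt Real.pi := by
      simpa using integral_gaussian 1
    rw [hh]
    rw [integral_const_mul, hg, hC]
    field_simp
  · intro t ht
    have hti : Integrable (fun x => h x * h (x + t)) := by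
      have h2 : Integrable (fun x => h (x + t)) := hint.comp_add_right t
      refine Integrable.bdd_mul (c := C) h2 hmeas (ae_of_all _ fun x => ?_)
      rw [Real.norm_eq_abs, abs_of_nonneg (hnn x), hh]
      simp only
      nlinarith [Real.exp_le_one_iff.2 (neg_nonpos.2 (sq_nonneg x)), Real.exp_pos (-x^2), hCpos.le]
    have h1 : ∫ x in Icc (0:ℝ) 1, (fun _ => C^2 * Real.exp (-5)) x ≤ ∫ x in Icc (0:ℝ) 1, h x * h (x + t) := by
      refine setIntegral_mono_on (integrableOn_const measure_Icc_lt_top.ne) hti.integrableOn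
        measurableSet_Icc ?_
      intro x hx
      have hx1 : Real.exp (-(1:ℝ)) ≤ Real.exp (-x^2) := by
        apply Real.exp_le_exp.2; nlinarith [hx.1, hx.2]
      have hx2 : Real.exp (-(4:ℝ)) ≤ Real.exp (-(x+t)^2) := by
        apply Real.exp_le_exp.2; nlinarith [hx.1, hx.2, ht.1, ht.2]
      have he : Real.exp (-5) = Real.exp (-(1:ℝ)) * Real.exp (-(4:ℝ)) := by
        rw [← Real.exp_add]; norm_num
      rw [hh]
      simp only
      rw [he]
      nlinarith [mul_le_mul hx1 hx2 (Real.exp_pos (-(4:ℝ))).le (Real.exp_pos (-x^2)).le,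
        hCpos, sq_nonneg C]
    have h2 : ∫ x in Icc (0:ℝ) 1, h x * h (x + t) ≤ ∫ x, h x * h (x + t) :=
      setIntegral_le_integral hti (ae_of_all _ fun x => mul_nonneg (hnn x) (hnn _))
    calc C^2 * Real.exp (-5) = ∫ x in Icc (0:ℝ) 1, (fun _ => C^2 * Real.exp (-5)) x := by
          rw [setIntegral_const]; simp
      _ ≤ _ := le_trans h1 h2

lemma tube_bound_bp (f : ℝ → ℝ) (hcont : Continuous f) (x b : ℝ)
    (hb : ∀ t ∈ Icc (0:ℝ) 1, f (x - t) + f (x + t) < b) :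
    ∃ δ > 0, ∀ y ∈ Metric.ball x δ, ∀ t ∈ Icc (0:ℝ) 1, f (y - t) + f (y + t) < b := by
  have hF : Continuous (fun p : ℝ × ℝ => f (p.1 - p.2) + f (p.1 + p.2)) :=
    (hcont.comp (continuous_fst.sub continuous_snd)).add
      (hcont.comp (continuous_fst.add continuous_snd))
  have hopen : IsOpen {p : ℝ × ℝ | f (p.1 - p.2) + f (p.1 + p.2) < b} :=
    isOpen_lt hF continuous_const
  have hsub : ({x} : Set ℝ) ×ˢ Icc (0:ℝ) 1 ⊆ {p : ℝ × ℝ | f (p.1 - p.2) + f (p.1 + p.2) < b} := by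
    rintro ⟨y, t⟩ ⟨hy, ht⟩
    simp only [mem_singleton_iff] at hy
    subst hy
    exact hb t ht
  obtain ⟨u, v, hu, _, hxu, htv, huv⟩ :=
    generalized_tube_lemma isCompact_singleton isCompact_Icc hopen hsub
  obtain ⟨δ, hδ, hball⟩ := Metric.isOpen_iff.1 hu x (hxu rfl)
  exact ⟨δ, hδ, fun y hy t ht => huv (Set.mk_mem_prod (hball hy) (htv ht))⟩

lemma tube_bound_lower_bp (f : ℝ → ℝ) (hcont : Continuous f) (x b : ℝ)
    (hb : ∀ t ∈ Icc (0:ℝ) 1, b < f (x - t) + f (x + t)) :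
    ∃ δ > 0, ∀ y ∈ Metric.ball x δ, ∀ t ∈ Icc (0:ℝ) 1, b < f (y - t) + f (y + t) := by
  have hF : Continuous (fun p : ℝ × ℝ => f (p.1 - p.2) + f (p.1 + p.2)) :=
    (hcont.comp (continuous_fst.sub continuous_snd)).add
      (hcont.comp (continuous_fst.add continuous_snd))
  have hopen : IsOpen {p : ℝ × ℝ | b < f (p.1 - p.2) + f (p.1 + p.2)} :=
    isOpen_lt continuous_const hF
  have hsub : ({x} : Set ℝ) ×ˢ Icc (0:ℝ) 1 ⊆ {p : ℝ × ℝ | b < f (p.1 - p.2) + f (p.1 + p.2)} := by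
    rintro ⟨y, t⟩ ⟨hy, ht⟩
    simp only [mem_singleton_iff] at hy
    subst hy
    exact hb t ht
  obtain ⟨u, v, hu, _, hxu, htv, huv⟩ :=
    generalized_tube_lemma isCompact_singleton isCompact_Icc hopen hsub
  obtain ⟨δ, hδ, hball⟩ := Metric.isOpen_iff.1 hu x (hxu rfl)
  exact ⟨δ, hδ, fun y hy t ht => huv (Set.mk_mem_prod (hball hy) (htv ht))⟩

lemma indicator_one_integral_bp (a b : ℝ) (hab : a ≤ b) :
    ∫ x, Set.indicator (Icc a b) (fun _ => (1:ℝ)) x = b - a := by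
  rw [integral_indicator measurableSet_Icc, setIntegral_const, Real.volume_real_Icc_of_le hab, smul_eq_mul,
    mul_one]

set_option maxHeartbeats 2000000 in
theorem not_maximizer_of_second_condition_fails (f : ℝ → ℝ)
    (hcont : Continuous f) (hf : Integrable f) (hpos : ∀ x, 0 ≤ f x)
    (hnorm : 0 < ∫ x, f x)
    (x₁ x₂ : ℝ) (hx₂ : x₂ ∈ tsupport f) (hne : x₁ ≠ x₂)
    (hgap : sSup ((fun t => f (x₂ - t) + f (x₂ + t)) '' Icc (0:ℝ) 1)
        < sInf ((fun t => f (x₁ - t) + f (x₁ + t)) '' Icc (0:ℝ) 1)) :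
    ∃ h : ℝ → ℝ, Integrable h ∧ (∀ x, 0 ≤ h x) ∧
      (∫ x, h x) = (∫ x, f x) ∧
      sInf ((fun t => ∫ x, f x * f (x + t)) '' Icc (0:ℝ) 1)
        < sInf ((fun t => ∫ x, h x * h (x + t)) '' Icc (0:ℝ) 1) := by
  set Af : ℝ → ℝ := fun t => ∫ x, f x * f (x + t) with hAf
  -- basic facts about the image of Af
  have hAfnn : ∀ t, 0 ≤ Af t := fun t =>
    integral_nonneg (fun x => mul_nonneg (hpos x) (hpos _))
  have hbddAf : BddBelow (Af '' Icc (0:ℝ) 1) := ⟨0, by rintro a ⟨t, _, rfl⟩; exact hAfnn t⟩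
  have hne01 : (Icc (0:ℝ) 1).Nonempty := ⟨0, le_refl _, zero_le_one⟩
  rcases le_or_gt (sInf (Af '' Icc (0:ℝ) 1)) 0 with hcase | hcase
  · -- degenerate case: use a Gaussian
    obtain ⟨h, hint, hnn, hM, c, hc, hcb⟩ := gaussian_aux_bp (∫ x, f x) hnorm
    refine ⟨h, hint, hnn, hM, ?_⟩
    have : c ≤ sInf ((fun t => ∫ x, h x * h (x + t)) '' Icc (0:ℝ) 1) := by
      apply le_csInf (hne01.image _)
      rintro b ⟨t, ht, rfl⟩
      exact hcb t ht
    linarith only [this, hcase, hc]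
  · -- main case : 0 < sInf
    have hAint : ∀ t ∈ Icc (0:ℝ) 1, Integrable (fun x => f x * f (x + t)) := by
      intro t ht
      by_contra hni
      have h0 : Af t = 0 := integral_undef hni
      have : sInf (Af '' Icc (0:ℝ) 1) ≤ Af t := csInf_le hbddAf (mem_image_of_mem _ ht)
      rw [h0] at this; linarith only [this, hcase]
    set S := sSup ((fun t => f (x₂ - t) + f (x₂ + t)) '' Icc (0:ℝ) 1) with hS
    set I := sInf ((fun t => f (x₁ - t) + f (x₁ + t)) '' Icc (0:ℝ) 1) with hI
    set γ := I - S with hγ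
    have hγpos : 0 < γ := by rw [hγ]; exact sub_pos.2 hgap
    have hSle : ∀ t ∈ Icc (0:ℝ) 1, f (x₂ - t) + f (x₂ + t) ≤ S := by
      intro t ht
      exact le_csSup ((isCompact_Icc.image (by continuity)).bddAbove) (mem_image_of_mem _ ht)
    have hIle : ∀ t ∈ Icc (0:ℝ) 1, I ≤ f (x₁ - t) + f (x₁ + t) := by
      intro t ht
      exact csInf_le ((isCompact_Icc.image (by continuity)).bddBelow) (mem_image_of_mem _ ht)
    obtain ⟨δ₂, hδ₂, hub⟩ := tube_bound_bp f hcont x₂ (S + γ/3)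
      (fun t ht => lt_of_le_of_lt (hSle t ht) (lt_add_of_pos_right S (div_pos hγpos (by norm_num))))
    obtain ⟨δ₁, hδ₁, hlb⟩ := tube_bound_lower_bp f hcont x₁ (I - γ/3)
      (fun t ht => lt_of_lt_of_le (sub_lt_self I (div_pos hγpos (by norm_num))) (hIle t ht))
    -- a point near x₂ where f is positive
    have hx₂' : ∃ x₂', x₂' ∈ Metric.ball x₂ (δ₂/2) ∧ 0 < f x₂' := by
      have := mem_closure_iff.1 hx₂ (Metric.ball x₂ (δ₂/2)) Metric.isOpen_ball
        (Metric.mem_ball_self (by linarith only [hδ₂]))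
      obtain ⟨y, hy1, hy2⟩ := this
      exact ⟨y, hy1, lt_of_le_of_ne (hpos y) (Ne.symm hy2)⟩
    obtain ⟨x₂', hx₂'ball, hx₂'pos⟩ := hx₂'
    set m := f x₂' / 2 with hm
    have hmpos : 0 < m := by positivity
    have hopenm : IsOpen {y : ℝ | m < f y} := isOpen_lt continuous_const hcont
    obtain ⟨δ₃, hδ₃, hballm⟩ := Metric.isOpen_iff.1 hopenm x₂' (by simp only [mem_setOf_eq, hm]; linarith only [hx₂'pos])
    set δ := min (δ₂/4) (min (δ₁/2) (δ₃/2)) with hδdef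
    have hδpos : 0 < δ := by
      simp only [hδdef, lt_min_iff]
      exact ⟨by linarith only [hδ₂], by linarith only [hδ₁], by linarith only [hδ₃]⟩
    have hδleδ₂ : δ ≤ δ₂/4 := min_le_left _ _
    have hδleδ₁ : δ ≤ δ₁/2 := le_trans (min_le_right _ _) (min_le_left _ _)
    have hδleδ₃ : δ ≤ δ₃/2 := le_trans (min_le_right _ _) (min_le_right _ _)
    set J₁ := Icc (x₁ - δ) (x₁ + δ) with hJ₁def
    set J₂ := Icc (x₂' - δ) (x₂' + δ) with hJ₂def
    have hJ₁ball : ∀ y ∈ J₁, y ∈ Metric.ball x₁ δ₁ := by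
      intro y hy
      rw [Metric.mem_ball, Real.dist_eq]
      rw [hJ₁def, mem_Icc] at hy
      rw [abs_lt]; constructor <;> linarith only [hy.1, hy.2, hδleδ₁, hδ₁]
    have hJ₂ball : ∀ y ∈ J₂, y ∈ Metric.ball x₂ δ₂ := by
      intro y hy
      rw [Metric.mem_ball, Real.dist_eq]
      rw [hJ₂def, mem_Icc] at hy
      have hd : |x₂' - x₂| < δ₂/2 := by
        have := hx₂'ball; rwa [Metric.mem_ball, Real.dist_eq] at this
      rw [abs_lt] at hd ⊢
      constructor <;> linarith only [hy.1, hy.2, hd.1, hd.2, hδleδ₂, hδ₂]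
    have hJ₂m : ∀ y ∈ J₂, m < f y := by
      intro y hy
      apply hballm
      rw [Metric.mem_ball, Real.dist_eq]
      rw [hJ₂def, mem_Icc] at hy
      rw [abs_lt]; constructor <;> linarith only [hy.1, hy.2, hδleδ₃, hδ₃]
    set ε' := min m (γ/12) with hε'def
    have hε'pos : 0 < ε' := lt_min hmpos (by linarith)
    have hε'm : ε' ≤ m := min_le_left _ _
    have hε'γ : ε' ≤ γ/12 := min_le_right _ _
    set χ₁ : ℝ → ℝ := Set.indicator J₁ (fun _ => (1:ℝ)) with hχ₁def
    set χ₂ : ℝ → ℝ := Set.indicator J₂ (fun _ => (1:ℝ)) with hχ₂def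
    have hχ₁int : Integrable χ₁ := by
      rw [hχ₁def, integrable_indicator_iff measurableSet_Icc]
      exact integrableOn_const measure_Icc_lt_top.ne
    have hχ₂int : Integrable χ₂ := by
      rw [hχ₂def, integrable_indicator_iff measurableSet_Icc]
      exact integrableOn_const measure_Icc_lt_top.ne
    have hχ₁val : ∫ x, χ₁ x = 2*δ := by
      rw [hχ₁def, indicator_one_integral_bp _ _ (by linarith)]; ring
    have hχ₂val : ∫ x, χ₂ x = 2*δ := by
      rw [hχ₂def, indicator_one_integral_bp _ _ (by linarith)]; ring
    have hχ₁mem : ∀ x, χ₁ x = 0 ∨ (χ₁ x = 1 ∧ x ∈ J₁) := by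
      intro x
      by_cases hx : x ∈ J₁
      · right; exact ⟨by simp [hχ₁def, hx], hx⟩
      · left; simp [hχ₁def, hx]
    have hχ₂mem : ∀ x, χ₂ x = 0 ∨ (χ₂ x = 1 ∧ x ∈ J₂) := by
      intro x
      by_cases hx : x ∈ J₂
      · right; exact ⟨by simp [hχ₂def, hx], hx⟩
      · left; simp [hχ₂def, hx]
    set g : ℝ → ℝ := fun x => ε' * (χ₁ x - χ₂ x) with hgdef
    have hgint : Integrable g := (hχ₁int.sub hχ₂int).const_mul ε'
    have hgmeas : AEStronglyMeasurable g volume := hgint.aestronglyMeasurable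
    have hgb : ∀ x, |g x| ≤ ε' := by
      intro x
      rw [hgdef]
      simp only
      rw [abs_mul, abs_of_nonneg hε'pos.le]
      have hb : |χ₁ x - χ₂ x| ≤ 1 := by
        rcases hχ₁mem x with h1 | ⟨h1, _⟩ <;> rcases hχ₂mem x with h2 | ⟨h2, _⟩ <;>
          rw [h1, h2] <;> norm_num
      calc ε' * |χ₁ x - χ₂ x| ≤ ε' * 1 := mul_le_mul_of_nonneg_left hb hε'pos.le
        _ = ε' := mul_one ε'
    set h : ℝ → ℝ := fun x => f x + g x with hhdef
    have hhint : Integrable h := hf.add hgint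
    have hhnn : ∀ x, 0 ≤ h x := by
      intro x
      have hhx : h x = f x + ε' * (χ₁ x - χ₂ x) := rfl
      rw [hhx]
      rcases hχ₂mem x with h2 | ⟨h2, hx2⟩
      · rcases hχ₁mem x with h1 | ⟨h1, _⟩ <;> rw [h1, h2] <;>
          linarith only [hpos x, hε'pos]
      · have hfx := hJ₂m x hx2
        rcases hχ₁mem x with h1 | ⟨h1, _⟩ <;> rw [h1, h2] <;>
          linarith only [hε'pos, hε'm, hfx, hpos x]
    have hgzero : ∫ x, g x = 0 := by
      rw [hgdef]
      rw [integral_const_mul, integral_sub hχ₁int hχ₂int, hχ₁val, hχ₂val]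
      ring
    have hhval : ∫ x, h x = ∫ x, f x := by
      rw [hhdef, integral_add hf hgint, hgzero, add_zero]
    -- the key pointwise-in-t gain estimate
    set c := δ * ε' * γ / 3 with hcdef
    have hcpos : 0 < c := by
      rw [hcdef]
      exact div_pos (mul_pos (mul_pos hδpos hε'pos) hγpos) (by norm_num)
    clear_value S I γ m δ ε' J₁ J₂ χ₁ χ₂ g h c
    have hkey : ∀ t ∈ Icc (0:ℝ) 1, Af t + c ≤ ∫ x, h x * h (x + t) := by
      intro t ht
      have hft : Integrable (fun x => f (x + t)) := hf.comp_add_right t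
      have hfmt : Integrable (fun x => f (x - t)) := hf.comp_sub_right t
      have hgt : Integrable (fun x => g (x + t)) := hgint.comp_add_right t
      have i1 : Integrable (fun x => f x * f (x + t)) := hAint t ht
      have hgbn : ∀ x, ‖g x‖ ≤ ε' := fun x => by rw [Real.norm_eq_abs]; exact hgb x
      have i3 : Integrable (fun x => g x * f (x + t)) :=
        Integrable.bdd_mul hft hgmeas (ae_of_all _ hgbn)
      have i3' : Integrable (fun x => g x * f (x - t)) :=
        Integrable.bdd_mul hfmt hgmeas (ae_of_all _ hgbn)
      have i2' : Integrable (fun x => g (x + t) * f x) :=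
        Integrable.bdd_mul hf hgt.aestronglyMeasurable (ae_of_all _ fun x => hgbn (x + t))
      have i2 : Integrable (fun x => f x * g (x + t)) := by
        have : (fun x => f x * g (x + t)) = fun x => g (x + t) * f x := by
          funext x; ring
        rw [this]; exact i2'
      have i4 : Integrable (fun x => g x * g (x + t)) :=
        Integrable.bdd_mul hgt hgmeas (ae_of_all _ hgbn)
      -- expansion
      have hexpand : ∫ x, h x * h (x + t) =
          Af t + ((∫ x, f x * g (x + t)) + ((∫ x, g x * f (x + t)) + ∫ x, g x * g (x + t))) := by
        rw [hAf]
        simp only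
        have hfe : (fun x => h x * h (x + t)) = fun x =>
            f x * f (x + t) + (f x * g (x + t) + (g x * f (x + t) + g x * g (x + t))) := by
          funext x; rw [hhdef]; ring
        have i34 : Integrable (fun x => g x * f (x + t) + g x * g (x + t)) := i3.add i4
        have i234 : Integrable (fun x =>
            f x * g (x + t) + (g x * f (x + t) + g x * g (x + t))) := i2.add i34
        rw [hfe, integral_add i1 i234, integral_add i2 i34, integral_add i3 i4]
      -- change of variables for the first cross term
      have hcv : (∫ x, f x * g (x + t)) = ∫ x, g x * f (x - t) := by
        have := integral_add_right_eq_self (μ := volume) (fun y => g y * f (y - t)) t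
        simp only [add_sub_cancel_right] at this
        rw [← this]
        congr 1
        funext x
        ring
      set F : ℝ → ℝ := fun y => f (y - t) + f (y + t) with hFdef
      -- combine cross terms
      have hcross : (∫ x, f x * g (x + t)) + (∫ x, g x * f (x + t))
          = ∫ x, g x * F x := by
        rw [hcv, ← integral_add i3' i3]
        simp only [hFdef]
        congr 1
        funext x
        ring
      have hFcont : Continuous F := by
        rw [hFdef]
        exact (hcont.comp (continuous_id.sub continuous_const)).add
          (hcont.comp (continuous_id.add continuous_const))
      have hFnn : ∀ y, 0 ≤ F y := fun y => add_nonneg (hpos _) (hpos _)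
      have hmJ₁ : MeasurableSet J₁ := by rw [hJ₁def]; exact measurableSet_Icc
      have hmJ₂ : MeasurableSet J₂ := by rw [hJ₂def]; exact measurableSet_Icc
      have hfinJ₁ : volume J₁ ≠ ⊤ := by rw [hJ₁def]; exact measure_Icc_lt_top.ne
      have hfinJ₂ : volume J₂ ≠ ⊤ := by rw [hJ₂def]; exact measure_Icc_lt_top.ne
      have hvolJ₁ : (volume J₁).toReal = 2*δ := by
        rw [hJ₁def, Real.volume_Icc, ENNReal.toReal_ofReal (by linarith only [hδpos])]; ring
      have hvolJ₂ : (volume J₂).toReal = 2*δ := by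
        rw [hJ₂def, Real.volume_Icc, ENNReal.toReal_ofReal (by linarith only [hδpos])]; ring
      have hiJ₁ : IntegrableOn F J₁ := by rw [hJ₁def]; exact hFcont.integrableOn_Icc
      have hiJ₂ : IntegrableOn F J₂ := by rw [hJ₂def]; exact hFcont.integrableOn_Icc
      have hind₁ : Integrable (fun x => χ₁ x * F x) := by
        have he : (fun x => χ₁ x * F x) = Set.indicator J₁ F := by
          funext x
          rw [hχ₁def]
          by_cases hx : x ∈ J₁ <;> simp [hx]
        rw [he, integrable_indicator_iff hmJ₁]
        exact hiJ₁
      have hind₂ : Integrable (fun x => χ₂ x * F x) := by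
        have he : (fun x => χ₂ x * F x) = Set.indicator J₂ F := by
          funext x
          rw [hχ₂def]
          by_cases hx : x ∈ J₂ <;> simp [hx]
        rw [he, integrable_indicator_iff hmJ₂]
        exact hiJ₂
      have hval₁ : ∫ x, χ₁ x * F x = ∫ x in J₁, F x := by
        have he : (fun x => χ₁ x * F x) = Set.indicator J₁ F := by
          funext x
          rw [hχ₁def]
          by_cases hx : x ∈ J₁ <;> simp [hx]
        rw [he, integral_indicator hmJ₁]
      have hval₂ : ∫ x, χ₂ x * F x = ∫ x in J₂, F x := by
        have he : (fun x => χ₂ x * F x) = Set.indicator J₂ F := by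
          funext x
          rw [hχ₂def]
          by_cases hx : x ∈ J₂ <;> simp [hx]
        rw [he, integral_indicator hmJ₂]
      have hgF : ∫ x, g x * F x = ε' * ((∫ x in J₁, F x) - ∫ x in J₂, F x) := by
        have he : (fun x => g x * F x) = fun x => ε' * (χ₁ x * F x - χ₂ x * F x) := by
          funext x; rw [hgdef]; ring
        rw [he, integral_const_mul, integral_sub hind₁ hind₂, hval₁, hval₂]
      -- lower bound on ∫_{J₁} F
      have hlow : 2*δ*(I - γ/3) ≤ ∫ x in J₁, F x := by
        have hc1 : ∫ x in J₁, (I - γ/3) ≤ ∫ x in J₁, F x := by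
          refine setIntegral_mono_on (integrableOn_const hfinJ₁) hiJ₁
            hmJ₁ ?_
          intro y hy
          exact le_of_lt (hlb y (hJ₁ball y hy) t ht)
        have hc2 : ∫ x in J₁, (I - γ/3) = 2*δ*(I - γ/3) := by
          rw [setIntegral_const, measureReal_def, smul_eq_mul, hvolJ₁]
        linarith only [hc1, hc2]
      -- upper bound on ∫_{J₂} F
      have hupp : ∫ x in J₂, F x ≤ 2*δ*(S + γ/3) := by
        have hc1 : ∫ x in J₂, F x ≤ ∫ x in J₂, (S + γ/3) := by
          refine setIntegral_mono_on hiJ₂ (integrableOn_const hfinJ₂)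
            hmJ₂ ?_
          intro y hy
          exact le_of_lt (hub y (hJ₂ball y hy) t ht)
        have hc2 : ∫ x in J₂, (S + γ/3) = 2*δ*(S + γ/3) := by
          rw [setIntegral_const, measureReal_def, smul_eq_mul, hvolJ₂]
        linarith only [hc1, hc2]
      -- quadratic term lower bound
      have hquad : -(4*δ*ε'^2) ≤ ∫ x, g x * g (x + t) := by
        have hptw : ∀ x, (fun x => -(ε'^2) * (χ₁ x + χ₂ x)) x ≤ g x * g (x + t) := by
          intro x
          simp only
          have hb1 := hgb x
          have hb2 := hgb (x + t)
          have habs : |g x * g (x + t)| ≤ ε' * ε' := by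
            rw [abs_mul]; exact mul_le_mul hb1 hb2 (abs_nonneg _) hε'pos.le
          have hlo : -(ε' * ε') ≤ g x * g (x + t) := (abs_le.1 habs).1
          have hsq : 0 ≤ ε' * ε' := mul_nonneg hε'pos.le hε'pos.le
          rcases hχ₁mem x with h1 | ⟨h1, _⟩ <;> rcases hχ₂mem x with h2 | ⟨h2, _⟩ <;>
            rw [h1, h2]
          · have hg0 : g x = 0 := by
              rw [hgdef]; simp only; rw [h1, h2]; ring
            rw [hg0, zero_mul]
            linarith only [hsq]
          all_goals linarith only [hlo, hsq]
        have hlint : Integrable (fun x => -(ε'^2) * (χ₁ x + χ₂ x)) :=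
          (hχ₁int.add hχ₂int).const_mul _
        have hmono := integral_mono hlint i4 hptw
        have hval : ∫ x, -(ε'^2) * (χ₁ x + χ₂ x) = -(4*δ*ε'^2) := by
          rw [integral_const_mul, integral_add hχ₁int hχ₂int, hχ₁val, hχ₂val]
          ring
        linarith only [hmono, hval]
      -- put everything together
      rw [hexpand]
      have hsum : (∫ x, f x * g (x + t)) + ((∫ x, g x * f (x + t)) + ∫ x, g x * g (x + t))
          = (∫ x, g x * F x) + ∫ x, g x * g (x + t) := by
        rw [← hcross]
        ring
      have hgain : c ≤ (∫ x, g x * F x) + ∫ x, g x * g (x + t) := by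
        rw [hgF, hcdef]
        have e1 : ε' * ((∫ x in J₁, F x) - ∫ x in J₂, F x) ≥ ε' * (2*δ*(I - γ/3) - 2*δ*(S + γ/3)) := by
          apply mul_le_mul_of_nonneg_left _ hε'pos.le
          linarith
        have e2 : 2*δ*(I - γ/3) - 2*δ*(S + γ/3) = 2*δ*(γ/3) := by
          rw [hγ]; ring
        rw [e2] at e1
        have hint2 : 0 ≤ δ * ε' * (γ/12 - ε') :=
          mul_nonneg (mul_nonneg hδpos.le hε'pos.le) (sub_nonneg.2 hε'γ)
        linarith only [e1, hquad, hint2]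
      linarith only [hsum, hgain]
    -- conclude
    refine ⟨h, hhint, hhnn, hhval, ?_⟩
    have hfin : sInf (Af '' Icc (0:ℝ) 1) + c ≤
        sInf ((fun t => ∫ x, h x * h (x + t)) '' Icc (0:ℝ) 1) := by
      apply le_csInf (hne01.image _)
      rintro b ⟨t, ht, rfl⟩
      have h1 : sInf (Af '' Icc (0:ℝ) 1) ≤ Af t := csInf_le hbddAf (mem_image_of_mem _ ht)
      have h2 := hkey t ht
      simp only
      linarith only [h1, h2]
    have : sInf (Af '' Icc (0:ℝ) 1) = sInf ((fun t => ∫ x, f x * f (x + t)) '' Icc (0:ℝ) 1) := rfl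
    linarith only [hfin, hcpos]
end

section
/- If a continuous nonnegative integrable f : ℝ → ℝ with ‖f‖_{L¹} > 0 maximizes F(f) = (min_{t∈[0,1]} ∫_ℝ f(x)f(x+t) dx)/‖f‖_{L¹}², then max_{x₁∈ℝ} min_{t∈[0,1]} [f(x₁−t)+f(x₁+t)] ≤ min_{x₂∈supp(f)} max_{t∈[0,1]} [f(x₂−t)+f(x₂+t)]. -/
open MeasureTheory Set

lemma aux_le_of_forall (a b N : ℝ) (hN : 0 ≤ N) (h : ∀ s : ℝ, 0 < s → a ≤ b + N * s) : a ≤ b := by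
  refine le_of_forall_pos_le_add (fun ε hε => ?_)
  have hs : (0:ℝ) < ε / (N + 1) := by positivity
  have h2 := h _ hs
  have h3 : N * (ε / (N + 1)) ≤ ε := by
    rw [mul_div_assoc', div_le_iff₀ (by linarith)]; nlinarith
  linarith

set_option maxHeartbeats 1000000 in
lemma claim1 (f : ℝ → ℝ)
    (hcont : Continuous f) (hf : Integrable f) (hpos : ∀ x, 0 ≤ f x)
    (hnorm : 0 < ∫ x, f x)
    (hint : ∀ t ∈ Icc (0:ℝ) 1, Integrable (fun x => f x * f (x + t)))
    (hmax : ∀ g : ℝ → ℝ, Integrable g → (∀ x, 0 ≤ g x) →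
      sInf ((fun t => ∫ x, g x * g (x + t)) '' Icc (0:ℝ) 1) / (∫ x, g x)^2
        ≤ sInf ((fun t => ∫ x, f x * f (x + t)) '' Icc (0:ℝ) 1) / (∫ x, f x)^2)
    (x₁ : ℝ) :
    sInf ((fun t => f (x₁ - t) + f (x₁ + t)) '' Icc (0:ℝ) 1)
      ≤ 2 * sInf ((fun t => ∫ x, f x * f (x + t)) '' Icc (0:ℝ) 1) / (∫ x, f x) := by
  set I := ∫ x, f x with hI
  set A : ℝ → ℝ := fun t => ∫ x, f x * f (x + t) with hA
  set N := sInf (A '' Icc (0:ℝ) 1) with hN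
  set m := sInf ((fun t => f (x₁ - t) + f (x₁ + t)) '' Icc (0:ℝ) 1) with hm
  have hA0 : ∀ t, 0 ≤ A t := fun t => integral_nonneg (fun x => mul_nonneg (hpos x) (hpos (x+t)))
  have hSne : (A '' Icc (0:ℝ) 1).Nonempty := ⟨A 0, ⟨0, by simp, rfl⟩⟩
  have hSbd : BddBelow (A '' Icc (0:ℝ) 1) := ⟨0, by rintro y ⟨t, ht, rfl⟩; exact hA0 t⟩
  have hN0 : 0 ≤ N := le_csInf hSne (by rintro y ⟨t, ht, rfl⟩; exact hA0 t)
  have hNle : ∀ t ∈ Icc (0:ℝ) 1, N ≤ A t := fun t ht => csInf_le hSbd ⟨t, ht, rfl⟩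
  have hmle : ∀ t ∈ Icc (0:ℝ) 1, m ≤ f (x₁ - t) + f (x₁ + t) := fun t ht =>
    csInf_le ⟨0, by rintro y ⟨u, hu, rfl⟩; exact add_nonneg (hpos _) (hpos _)⟩ ⟨t, ht, rfl⟩
  -- the key perturbation estimate
  have main : ∀ δ : ℝ, 0 < δ → ∀ s : ℝ, 0 < s → (m - 2*δ) * I^2 ≤ 2*N*I + N*s := by
    intro δ hδ s hs
    obtain ⟨d, hd, hmod⟩ := Metric.uniformContinuousOn_iff.1
      ((isCompact_Icc (a := x₁ - 3) (b := x₁ + 3)).uniformContinuousOn_of_continuous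
        hcont.continuousOn) δ hδ
    set η := min (d/2) 1 with hη
    have hη0 : 0 < η := lt_min (by linarith) one_pos
    have hη1 : η ≤ 1 := min_le_right _ _
    have hηd : η < d := lt_of_le_of_lt (min_le_left _ _) (by linarith)
    set c := s / (2*η) with hc
    have hc0 : 0 < c := div_pos hs (by linarith)
    set J := Icc (x₁ - η) (x₁ + η) with hJ
    have hJfin : volume J < ⊤ := by rw [hJ, Real.volume_Icc]; exact ENNReal.ofReal_lt_top
    set φ := J.indicator (fun _ => c) with hφ
    have hφ0 : ∀ x, 0 ≤ φ x := fun x => Set.indicator_nonneg (fun _ _ => hc0.le) x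
    have hφbd : ∀ x, ‖φ x‖ ≤ c := by
      intro x
      rw [Real.norm_eq_abs]
      by_cases hx : x ∈ J
      · rw [hφ, Set.indicator_of_mem hx, abs_of_nonneg hc0.le]
      · rw [hφ, Set.indicator_of_notMem hx]; simpa using hc0.le
    have hφm : Measurable φ := measurable_const.indicator measurableSet_Icc
    have hφint : Integrable φ := by
      refine (integrable_indicator_iff measurableSet_Icc).2 ?_
      exact integrableOn_const (by rw [Real.volume_Icc]; exact ENNReal.ofReal_ne_top)
    have hφval : ∫ x, φ x = s := by
      rw [hφ, integral_indicator measurableSet_Icc, setIntegral_const, Real.volume_real_Icc_of_le (by linarith), smul_eq_mul]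
      rw [hc, mul_div_assoc', div_eq_iff (by positivity)]
      ring
    set g := fun x => f x + φ x with hg
    have hgint : Integrable g := hf.add hφint
    have hgpos : ∀ x, 0 ≤ g x := fun x => add_nonneg (hpos x) (hφ0 x)
    have hgI : ∫ x, g x = I + s := by rw [hg, integral_add hf hφint, hφval]
    -- modulus estimate
    have hmod' : ∀ t ∈ Icc (0:ℝ) 1, ∀ y ∈ J,
        f (x₁ - t) - δ ≤ f (y - t) ∧ f (x₁ + t) - δ ≤ f (y + t) := by
      rintro t ⟨ht0, ht1⟩ y hy
      rw [hJ, mem_Icc] at hy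
      constructor
      · have h1 : y - t ∈ Icc (x₁ - 3) (x₁ + 3) := by
          rw [mem_Icc]; constructor <;> nlinarith
        have h2 : x₁ - t ∈ Icc (x₁ - 3) (x₁ + 3) := by
          rw [mem_Icc]; constructor <;> nlinarith
        have h3 : dist (y - t) (x₁ - t) < d := by
          rw [Real.dist_eq]
          have he : y - t - (x₁ - t) = y - x₁ := by ring
          rw [he, abs_lt]
          constructor <;> linarith
        have := hmod _ h1 _ h2 h3
        rw [Real.dist_eq, abs_lt] at this
        linarith [this.1, this.2]
      · have h1 : y + t ∈ Icc (x₁ - 3) (x₁ + 3) := by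
          rw [mem_Icc]; constructor <;> nlinarith
        have h2 : x₁ + t ∈ Icc (x₁ - 3) (x₁ + 3) := by
          rw [mem_Icc]; constructor <;> nlinarith
        have h3 : dist (y + t) (x₁ + t) < d := by
          rw [Real.dist_eq]
          have he : y + t - (x₁ + t) = y - x₁ := by ring
          rw [he, abs_lt]
          constructor <;> linarith
        have := hmod _ h1 _ h2 h3
        rw [Real.dist_eq, abs_lt] at this
        linarith [this.1, this.2]
    -- lower bound for each autocorrelation of g
    have hglow : ∀ t ∈ Icc (0:ℝ) 1, N + s * (m - 2*δ) ≤ ∫ x, g x * g (x + t) := by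
      intro t ht
      have hφmt : Measurable (fun x => φ (x + t)) := hφm.comp (measurable_add_const t)
      have i1 : Integrable (fun x => f x * f (x + t)) := hint t ht
      have i2 : Integrable (fun x => f x * φ (x + t)) := by
        have := hf.bdd_mul hφmt.aestronglyMeasurable (Filter.Eventually.of_forall fun x => hφbd (x + t))
        simpa [mul_comm] using this
      have i3 : Integrable (fun x => φ x * f (x + t)) :=
        (hf.comp_add_right t).bdd_mul hφm.aestronglyMeasurable (Filter.Eventually.of_forall hφbd)
      have i4 : Integrable (fun x => φ x * φ (x + t)) :=
        (hφint.comp_add_right t).bdd_mul hφm.aestronglyMeasurable (Filter.Eventually.of_forall hφbd)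
      have hexp : (fun x => g x * g (x + t))
          = fun x => (f x * f (x + t) + f x * φ (x + t)) + (φ x * f (x + t) + φ x * φ (x + t)) := by
        funext x; simp only [hg]; ring
      have e := integral_add (μ := volume) (i1.add i2) (i3.add i4)
      simp only [Pi.add_apply] at e
      rw [hexp, e, integral_add i1 i2, integral_add i3 i4]
      have hT3 : 0 ≤ ∫ x, φ x * φ (x + t) :=
        integral_nonneg (fun x => mul_nonneg (hφ0 x) (hφ0 (x + t)))
      -- T1
      have hsub : ∫ x, f x * φ (x + t) = ∫ y, f (y - t) * φ y := by
        rw [← integral_add_right_eq_self (fun y => f (y - t) * φ y) t]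
        simp
      have hind1 : (fun y => f (y - t) * φ y) = J.indicator (fun y => f (y - t) * c) := by
        funext y
        by_cases hy : y ∈ J
        · rw [hφ, Set.indicator_of_mem hy, Set.indicator_of_mem hy]
        · rw [hφ, Set.indicator_of_notMem hy, Set.indicator_of_notMem hy, mul_zero]
      have hIO1 : IntegrableOn (fun y => f (y - t) * c) J := by
        have : Integrable (fun y => f (y - t)) := by
          simpa [sub_eq_add_neg] using hf.comp_add_right (-t)
        exact (this.mul_const c).integrableOn
      have hT1 : s * (f (x₁ - t) - δ) ≤ ∫ x, f x * φ (x + t) := by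
        rw [hsub, hind1, integral_indicator measurableSet_Icc]
        have hlow : ∫ y in J, (f (x₁ - t) - δ) * c ≤ ∫ y in J, f (y - t) * c := by
          refine setIntegral_mono_on (integrableOn_const hJfin.ne) hIO1 measurableSet_Icc ?_
          intro y hy
          exact mul_le_mul_of_nonneg_right ((hmod' t ht y hy).1) hc0.le
        have hconst : ∫ y in J, (f (x₁ - t) - δ) * c = (2*η) * ((f (x₁ - t) - δ) * c) := by
          rw [setIntegral_const, Real.volume_real_Icc_of_le (by linarith), smul_eq_mul]
          ring_nf
        have h2ηc : 2 * η * c = s := by rw [hc]; field_simp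
        have heq : s * (f (x₁ - t) - δ) = (2*η) * ((f (x₁ - t) - δ) * c) := by
          rw [← h2ηc]; ring
        linarith [hlow, hconst, heq]
      -- T2
      have hind2 : (fun y => φ y * f (y + t)) = J.indicator (fun y => c * f (y + t)) := by
        funext y
        by_cases hy : y ∈ J
        · rw [hφ, Set.indicator_of_mem hy, Set.indicator_of_mem hy]
        · rw [hφ, Set.indicator_of_notMem hy, Set.indicator_of_notMem hy, zero_mul]
      have hIO2 : IntegrableOn (fun y => c * f (y + t)) J :=
        ((hf.comp_add_right t).const_mul c).integrableOn
      have hT2 : s * (f (x₁ + t) - δ) ≤ ∫ x, φ x * f (x + t) := by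
        rw [hind2, integral_indicator measurableSet_Icc]
        have hlow : ∫ y in J, (f (x₁ + t) - δ) * c ≤ ∫ y in J, c * f (y + t) := by
          refine setIntegral_mono_on (integrableOn_const hJfin.ne) hIO2 measurableSet_Icc ?_
          intro y hy
          have := (hmod' t ht y hy).2
          nlinarith [hc0.le]
        have hconst : ∫ y in J, (f (x₁ + t) - δ) * c = (2*η) * ((f (x₁ + t) - δ) * c) := by
          rw [setIntegral_const, Real.volume_real_Icc_of_le (by linarith), smul_eq_mul]
          ring_nf
        have h2ηc : 2 * η * c = s := by rw [hc]; field_simp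
        have heq : s * (f (x₁ + t) - δ) = (2*η) * ((f (x₁ + t) - δ) * c) := by
          rw [← h2ηc]; ring
        linarith [hlow, hconst, heq]
      have hNA := hNle t ht
      have hmt := hmle t ht
      have : s * (m - 2*δ) ≤ s * (f (x₁ - t) - δ) + s * (f (x₁ + t) - δ) := by
        nlinarith [mul_le_mul_of_nonneg_left hmt hs.le]
      linarith
    -- apply maximality
    have hgim : (0:ℝ) ∈ Icc (0:ℝ) 1 := by norm_num
    have hgsinf : N + s * (m - 2*δ) ≤ sInf ((fun t => ∫ x, g x * g (x + t)) '' Icc (0:ℝ) 1) := by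
      refine le_csInf ⟨_, ⟨0, hgim, rfl⟩⟩ ?_
      rintro y ⟨t, ht, rfl⟩
      exact hglow t ht
    have hmax' := hmax g hgint hgpos
    rw [hgI] at hmax'
    have hd1 : (0:ℝ) < (I + s)^2 := by positivity
    have hd2 : (0:ℝ) < I^2 := by positivity
    have hcross : (N + s * (m - 2*δ)) * I^2 ≤ N * (I + s)^2 := by
      have h1 : sInf ((fun t => ∫ x, g x * g (x + t)) '' Icc (0:ℝ) 1) / (I + s)^2 ≤ N / I^2 := hmax'
      have h2 : (N + s * (m - 2*δ)) / (I + s)^2 ≤ N / I^2 :=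
        le_trans ((div_le_div_iff_of_pos_right hd1).2 hgsinf) h1
      exact (div_le_div_iff₀ hd1 hd2).1 h2
    nlinarith [hcross, hs, mul_pos hs hs]
  -- take limits
  have step1 : ∀ δ : ℝ, 0 < δ → (m - 2*δ) * I^2 ≤ 2*N*I :=
    fun δ hδ => aux_le_of_forall _ _ N hN0 (main δ hδ)
  have step2 : m * I^2 ≤ 2*N*I := by
    refine le_of_forall_pos_le_add (fun ε hε => ?_)
    have hδ : (0:ℝ) < ε / (2*I^2) := by positivity
    have := step1 _ hδ
    have hh : 2 * (ε / (2*I^2)) * I^2 = ε := by field_simp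
    nlinarith [this]
  rw [le_div_iff₀ hnorm]
  nlinarith [step2, hnorm, mul_pos hnorm hnorm]


lemma aux_le_of_forall' (a b N I : ℝ) (hN : 0 ≤ N) (hI : 0 < I)
    (h : ∀ s : ℝ, 0 < s → s < I → a ≤ b + N * s) : a ≤ b := by
  refine le_of_forall_pos_le_add (fun ε hε => ?_)
  set s := min (ε/(N+1)) (I/2) with hsdef
  have hs0 : 0 < s := lt_min (by positivity) (by linarith)
  have hsI : s < I := lt_of_le_of_lt (min_le_right _ _) (by linarith)
  have h2 := h s hs0 hsI
  have h3 : N * s ≤ ε := by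
    have h4 : s ≤ ε/(N+1) := min_le_left _ _
    have h5 : N * s ≤ N * (ε/(N+1)) := mul_le_mul_of_nonneg_left h4 hN
    have h6 : N * (ε/(N+1)) ≤ ε := by
      rw [mul_div_assoc', div_le_iff₀ (by linarith)]; nlinarith
    linarith
  linarith

set_option maxHeartbeats 1000000 in
lemma claim2 (f : ℝ → ℝ)
    (hcont : Continuous f) (hf : Integrable f) (hpos : ∀ x, 0 ≤ f x)
    (hnorm : 0 < ∫ x, f x)
    (hint : ∀ t ∈ Icc (0:ℝ) 1, Integrable (fun x => f x * f (x + t)))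
    (hmax : ∀ g : ℝ → ℝ, Integrable g → (∀ x, 0 ≤ g x) →
      sInf ((fun t => ∫ x, g x * g (x + t)) '' Icc (0:ℝ) 1) / (∫ x, g x)^2
        ≤ sInf ((fun t => ∫ x, f x * f (x + t)) '' Icc (0:ℝ) 1) / (∫ x, f x)^2)
    (x₂ : ℝ) (hx₂ : x₂ ∈ tsupport f) :
    2 * sInf ((fun t => ∫ x, f x * f (x + t)) '' Icc (0:ℝ) 1) / (∫ x, f x)
      ≤ sSup ((fun t => f (x₂ - t) + f (x₂ + t)) '' Icc (0:ℝ) 1) := by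
  set I := ∫ x, f x with hI
  set A : ℝ → ℝ := fun t => ∫ x, f x * f (x + t) with hA
  set N := sInf (A '' Icc (0:ℝ) 1) with hN
  set M := sSup ((fun t => f (x₂ - t) + f (x₂ + t)) '' Icc (0:ℝ) 1) with hM
  have hA0 : ∀ t, 0 ≤ A t := fun t => integral_nonneg (fun x => mul_nonneg (hpos x) (hpos (x+t)))
  have hSne : (A '' Icc (0:ℝ) 1).Nonempty := ⟨A 0, ⟨0, by simp, rfl⟩⟩
  have hSbd : BddBelow (A '' Icc (0:ℝ) 1) := ⟨0, by rintro y ⟨t, ht, rfl⟩; exact hA0 t⟩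
  have hN0 : 0 ≤ N := le_csInf hSne (by rintro y ⟨t, ht, rfl⟩; exact hA0 t)
  have hNle : ∀ t ∈ Icc (0:ℝ) 1, N ≤ A t := fun t ht => csInf_le hSbd ⟨t, ht, rfl⟩
  have hMbd : BddAbove ((fun t => f (x₂ - t) + f (x₂ + t)) '' Icc (0:ℝ) 1) :=
    isCompact_Icc.bddAbove_image
      (((hcont.comp (continuous_const.sub continuous_id)).add
        (hcont.comp (continuous_const.add continuous_id))).continuousOn)
  have hMle : ∀ t ∈ Icc (0:ℝ) 1, f (x₂ - t) + f (x₂ + t) ≤ M := fun t ht =>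
    le_csSup hMbd ⟨t, ht, rfl⟩
  -- key perturbation estimate
  have main : ∀ δ : ℝ, 0 < δ → ∀ ε : ℝ, 0 < ε → ε < I →
      2*N*I ≤ (M + 2*δ)*I^2 + N*ε := by
    intro δ hδ ε hε hεI
    obtain ⟨d, hd, hmod⟩ := Metric.uniformContinuousOn_iff.1
      ((isCompact_Icc (a := x₂ - 3) (b := x₂ + 3)).uniformContinuousOn_of_continuous
        hcont.continuousOn) δ hδ
    set D := min d 1 with hD
    have hD0 : 0 < D := lt_min hd one_pos
    have hD1 : D ≤ 1 := min_le_right _ _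
    have hDd : D ≤ d := min_le_left _ _
    -- find a point of positivity near x₂
    obtain ⟨x', hx's, hx'd⟩ := Metric.mem_closure_iff.1 hx₂ (D/2) (by positivity)
    have hfx' : 0 < f x' := lt_of_le_of_ne (hpos x') (Ne.symm hx's)
    obtain ⟨ρ₀, hρ₀, hball⟩ := Metric.continuousAt_iff.1 (hcont.continuousAt (x := x')) (f x'/2)
      (by positivity)
    obtain ⟨B, hB⟩ := (isCompact_Icc (a := x'-1) (b := x'+1)).exists_bound_of_continuousOn
      hcont.continuousOn
    have hB0 : 0 ≤ B := le_trans (norm_nonneg _) (hB x' ⟨by linarith, by linarith⟩)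
    set ρ := min (min (ρ₀/2) (D/2)) (min 1 (ε/(2*B+2))) with hρ
    have hρ0 : 0 < ρ := by
      refine lt_min (lt_min (by linarith) (by positivity)) (lt_min one_pos (by positivity))
    have hρρ₀ : ρ < ρ₀ := lt_of_le_of_lt ((min_le_left _ _).trans (min_le_left _ _)) (by linarith)
    have hρD : ρ ≤ D/2 := (min_le_left _ _).trans (min_le_right _ _)
    have hρ1 : ρ ≤ 1 := (min_le_right _ _).trans (min_le_left _ _)
    have hρε : ρ ≤ ε/(2*B+2) := (min_le_right _ _).trans (min_le_right _ _)
    set K := Icc (x'-ρ) (x'+ρ) with hK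
    have hKfin : volume K < ⊤ := by rw [hK, Real.volume_Icc]; exact ENNReal.ofReal_lt_top
    have hKsub : ∀ y ∈ K, y ∈ Icc (x'-1) (x'+1) := by
      intro y hy; rw [hK, mem_Icc] at hy; rw [mem_Icc]; constructor <;> linarith [hy.1, hy.2]
    have hKx₂ : ∀ y ∈ K, |y - x₂| < D := by
      intro y hy
      rw [hK, mem_Icc] at hy
      rw [Real.dist_eq] at hx'd
      rw [abs_lt] at *
      constructor <;> [nlinarith [hx'd.1, hx'd.2, hy.1, hy.2]; nlinarith [hx'd.1, hx'd.2, hy.1, hy.2]]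
    set μ := ∫ y in K, f y with hμ
    have hμlow : ρ * f x' ≤ μ := by
      have hc : ∫ y in K, (f x'/2) ≤ μ := by
        refine setIntegral_mono_on (integrableOn_const hKfin.ne)
          hf.integrableOn measurableSet_Icc ?_
        intro y hy
        rw [hK, mem_Icc] at hy
        have hdist : dist y x' < ρ₀ := by
          rw [Real.dist_eq, abs_lt]; constructor <;> linarith [hy.1, hy.2]
        have := hball hdist
        rw [Real.dist_eq, abs_lt] at this
        linarith [this.1, this.2]
      have hcv : ∫ y in K, (f x'/2) = (2*ρ) * (f x'/2) := by
        rw [setIntegral_const, hK, Real.volume_real_Icc_of_le (by linarith),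
          smul_eq_mul]
        ring_nf
      rw [hcv] at hc
      linarith
    have hμ0 : 0 < μ := lt_of_lt_of_le (by positivity) hμlow
    have hμε : μ ≤ ε := by
      have hc : μ ≤ ∫ y in K, B := by
        refine setIntegral_mono_on hf.integrableOn (integrableOn_const hKfin.ne)
          measurableSet_Icc ?_
        intro y hy
        exact le_trans (le_abs_self _) (hB y (hKsub y hy))
      have hcv : ∫ y in K, (B : ℝ) = (2*ρ) * B := by
        rw [setIntegral_const, hK, Real.volume_real_Icc_of_le (by linarith),
          smul_eq_mul]
        ring_nf
      rw [hcv] at hc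
      have : 2*ρ*B ≤ ε := by
        have h1 : 2*ρ*(B+1) ≤ ε := by
          have := mul_le_mul_of_nonneg_left hρε (by linarith : (0:ℝ) ≤ 2*(B+1))
          calc 2*ρ*(B+1) = 2*(B+1)*ρ := by ring
            _ ≤ 2*(B+1)*(ε/(2*B+2)) := mul_le_mul_of_nonneg_left hρε (by linarith)
            _ = ε := by field_simp
        nlinarith [hρ0]
      linarith
    have hμI : μ < I := lt_of_le_of_lt hμε hεI
    -- the perturbed function
    set h := K.indicator f with hh
    have hhint : Integrable h := hf.indicator measurableSet_Icc
    have hhval : ∫ x, h x = μ := by rw [hh, integral_indicator measurableSet_Icc]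
    have hh0 : ∀ x, 0 ≤ h x := fun x => Set.indicator_nonneg (fun y _ => hpos y) x
    have hhbd : ∀ x, ‖h x‖ ≤ B := by
      intro x
      by_cases hx : x ∈ K
      · rw [hh, Set.indicator_of_mem hx]; exact hB x (hKsub x hx)
      · rw [hh, Set.indicator_of_notMem hx]; simpa using hB0
    have hhm : Measurable h := hcont.measurable.indicator measurableSet_Icc
    set g := fun x => f x - h x with hg
    have hgint : Integrable g := hf.sub hhint
    have hgpos : ∀ x, 0 ≤ g x := by
      intro x
      by_cases hx : x ∈ K
      · rw [hg]; simp only; rw [hh, Set.indicator_of_mem hx]; simp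
      · rw [hg]; simp only; rw [hh, Set.indicator_of_notMem hx]; simpa using hpos x
    have hgI : ∫ x, g x = I - μ := by rw [hg, integral_sub hf hhint, hhval]
    -- modulus estimates for y ∈ K
    have hmod' : ∀ t ∈ Icc (0:ℝ) 1, ∀ y ∈ K,
        f (y - t) ≤ f (x₂ - t) + δ ∧ f (y + t) ≤ f (x₂ + t) + δ := by
      rintro t ⟨ht0, ht1⟩ y hy
      have hyx := hKx₂ y hy
      rw [abs_lt] at hyx
      constructor
      · have h1 : y - t ∈ Icc (x₂ - 3) (x₂ + 3) := by
          rw [mem_Icc]; constructor <;> nlinarith [hD1]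
        have h2 : x₂ - t ∈ Icc (x₂ - 3) (x₂ + 3) := by
          rw [mem_Icc]; constructor <;> nlinarith
        have h3 : dist (y - t) (x₂ - t) < d := by
          rw [Real.dist_eq]
          have he : y - t - (x₂ - t) = y - x₂ := by ring
          rw [he, abs_lt]
          constructor <;> linarith
        have := hmod _ h1 _ h2 h3
        rw [Real.dist_eq, abs_lt] at this
        linarith [this.1, this.2]
      · have h1 : y + t ∈ Icc (x₂ - 3) (x₂ + 3) := by
          rw [mem_Icc]; constructor <;> nlinarith [hD1]
        have h2 : x₂ + t ∈ Icc (x₂ - 3) (x₂ + 3) := by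
          rw [mem_Icc]; constructor <;> nlinarith
        have h3 : dist (y + t) (x₂ + t) < d := by
          rw [Real.dist_eq]
          have he : y + t - (x₂ + t) = y - x₂ := by ring
          rw [he, abs_lt]
          constructor <;> linarith
        have := hmod _ h1 _ h2 h3
        rw [Real.dist_eq, abs_lt] at this
        linarith [this.1, this.2]
    -- lower bound for each autocorrelation of g
    have hglow : ∀ t ∈ Icc (0:ℝ) 1, N - μ * (M + 2*δ) ≤ ∫ x, g x * g (x + t) := by
      intro t ht
      have hhmt : Measurable (fun x => h (x + t)) := hhm.comp (measurable_add_const t)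
      have i1 : Integrable (fun x => f x * f (x + t)) := hint t ht
      have i2 : Integrable (fun x => f x * h (x + t)) := by
        have := hf.bdd_mul hhmt.aestronglyMeasurable (Filter.Eventually.of_forall fun x => hhbd (x + t))
        simpa [mul_comm] using this
      have i3 : Integrable (fun x => h x * f (x + t)) :=
        (hf.comp_add_right t).bdd_mul hhm.aestronglyMeasurable (Filter.Eventually.of_forall hhbd)
      have i4 : Integrable (fun x => h x * h (x + t)) :=
        (hhint.comp_add_right t).bdd_mul hhm.aestronglyMeasurable (Filter.Eventually.of_forall hhbd)
      have hexp : (fun x => g x * g (x + t))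
          = fun x => (f x * f (x + t) - f x * h (x + t)) - (h x * f (x + t) - h x * h (x + t)) := by
        funext x; simp only [hg]; ring
      have e := integral_sub (μ := volume) (i1.sub i2) (i3.sub i4)
      simp only [Pi.sub_apply] at e
      rw [hexp, e, integral_sub i1 i2, integral_sub i3 i4]
      have hT3 : 0 ≤ ∫ x, h x * h (x + t) :=
        integral_nonneg (fun x => mul_nonneg (hh0 x) (hh0 (x + t)))
      -- T1
      have hsub : ∫ x, f x * h (x + t) = ∫ y, f (y - t) * h y := by
        rw [← integral_add_right_eq_self (fun y => f (y - t) * h y) t]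
        simp
      have hind1 : (fun y => f (y - t) * h y) = K.indicator (fun y => f (y - t) * f y) := by
        funext y
        by_cases hy : y ∈ K
        · rw [hh, Set.indicator_of_mem hy, Set.indicator_of_mem hy]
        · rw [hh, Set.indicator_of_notMem hy, Set.indicator_of_notMem hy, mul_zero]
      have hIO1 : IntegrableOn (fun y => f (y - t) * f y) K := by
        have h1 : Integrable (fun y => f (y - t) * f (y - t + t)) := (hint t ht).comp_sub_right t
        have h2 : Integrable (fun y => f (y - t) * f y) := by
          refine h1.congr (Filter.Eventually.of_forall (fun y => ?_))
          simp [sub_add_cancel]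
        exact h2.integrableOn
      have hT1 : ∫ x, f x * h (x + t) ≤ (f (x₂ - t) + δ) * μ := by
        rw [hsub, hind1, integral_indicator measurableSet_Icc]
        have hmono : ∫ y in K, f (y - t) * f y ≤ ∫ y in K, (f (x₂ - t) + δ) * f y := by
          refine setIntegral_mono_on hIO1 ((hf.const_mul _).integrableOn)
            measurableSet_Icc ?_
          intro y hy
          exact mul_le_mul_of_nonneg_right ((hmod' t ht y hy).1) (hpos y)
        have hval : ∫ y in K, (f (x₂ - t) + δ) * f y = (f (x₂ - t) + δ) * μ := by
          rw [hμ]; exact integral_const_mul _ _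
        linarith
      -- T2
      have hind2 : (fun x => h x * f (x + t)) = K.indicator (fun x => f x * f (x + t)) := by
        funext y
        by_cases hy : y ∈ K
        · rw [hh, Set.indicator_of_mem hy, Set.indicator_of_mem hy]
        · rw [hh, Set.indicator_of_notMem hy, Set.indicator_of_notMem hy, zero_mul]
      have hT2 : ∫ x, h x * f (x + t) ≤ μ * (f (x₂ + t) + δ) := by
        rw [hind2, integral_indicator measurableSet_Icc]
        have hmono : ∫ y in K, f y * f (y + t) ≤ ∫ y in K, f y * (f (x₂ + t) + δ) := by
          refine setIntegral_mono_on (hint t ht).integrableOn ((hf.mul_const _).integrableOn)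
            measurableSet_Icc ?_
          intro y hy
          exact mul_le_mul_of_nonneg_left ((hmod' t ht y hy).2) (hpos y)
        have hval : ∫ y in K, f y * (f (x₂ + t) + δ) = μ * (f (x₂ + t) + δ) := by
          rw [hμ]; exact integral_mul_const _ _
        linarith
      have hNA := hNle t ht
      have hMt := hMle t ht
      have hsum : (f (x₂ - t) + δ) * μ + μ * (f (x₂ + t) + δ) ≤ μ * (M + 2*δ) := by
        nlinarith [hμ0.le]
      linarith
    -- apply maximality
    have hgsinf : N - μ * (M + 2*δ) ≤ sInf ((fun t => ∫ x, g x * g (x + t)) '' Icc (0:ℝ) 1) := by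
      refine le_csInf ⟨_, ⟨0, by norm_num, rfl⟩⟩ ?_
      rintro y ⟨t, ht, rfl⟩
      exact hglow t ht
    have hmax' := hmax g hgint hgpos
    rw [hgI] at hmax'
    have hd1 : (0:ℝ) < (I - μ)^2 := pow_pos (by linarith [hμI]) 2
    have hd2 : (0:ℝ) < I^2 := by positivity
    have hcross : (N - μ * (M + 2*δ)) * I^2 ≤ N * (I - μ)^2 := by
      have h2 : (N - μ * (M + 2*δ)) / (I - μ)^2 ≤ N / I^2 :=
        le_trans ((div_le_div_iff_of_pos_right hd1).2 hgsinf) hmax'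
      exact (div_le_div_iff₀ hd1 hd2).1 h2
    have hstep : 2*N*I ≤ (M + 2*δ)*I^2 + N*μ := by
      nlinarith [hcross, hμ0, mul_pos hμ0 hμ0]
    have : N*μ ≤ N*ε := mul_le_mul_of_nonneg_left hμε hN0
    linarith
  -- take limits
  have step1 : ∀ δ : ℝ, 0 < δ → 2*N*I ≤ (M + 2*δ)*I^2 := by
    intro δ hδ
    exact aux_le_of_forall' _ _ N I hN0 hnorm (fun s hs hsI => main δ hδ s hs hsI)
  have step2 : 2*N*I ≤ M*I^2 := by
    refine le_of_forall_pos_le_add (fun ε hε => ?_)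
    have hδ : (0:ℝ) < ε / (2*I^2) := by positivity
    have := step1 _ hδ
    have hh : 2 * (ε / (2*I^2)) * I^2 = ε := by field_simp
    nlinarith [this]
  rw [div_le_iff₀ hnorm]
  nlinarith [step2, hnorm, mul_pos hnorm hnorm]


lemma degenerate_case (f : ℝ → ℝ) (hpos : ∀ x, 0 ≤ f x)
    (hnorm : 0 < ∫ x, f x)
    (hmax : ∀ g : ℝ → ℝ, Integrable g → (∀ x, 0 ≤ g x) →
      sInf ((fun t => ∫ x, g x * g (x + t)) '' Icc (0:ℝ) 1) / (∫ x, g x)^2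
        ≤ sInf ((fun t => ∫ x, f x * f (x + t)) '' Icc (0:ℝ) 1) / (∫ x, f x)^2)
    (t₀ : ℝ) (ht₀ : t₀ ∈ Icc (0:ℝ) 1)
    (hni : ¬ Integrable (fun x => f x * f (x + t₀))) : False := by
  set I := ∫ x, f x with hI
  set A : ℝ → ℝ := fun t => ∫ x, f x * f (x + t) with hA
  set N := sInf (A '' Icc (0:ℝ) 1) with hN
  have hA0 : ∀ t, 0 ≤ A t := fun t => integral_nonneg (fun x => mul_nonneg (hpos x) (hpos (x+t)))
  have hSbd : BddBelow (A '' Icc (0:ℝ) 1) := ⟨0, by rintro y ⟨t, ht, rfl⟩; exact hA0 t⟩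
  have hAt₀ : A t₀ = 0 := integral_undef hni
  have hN0 : N ≤ 0 := le_of_le_of_eq (csInf_le hSbd ⟨t₀, ht₀, rfl⟩) hAt₀
  -- the competitor
  set g₀ : ℝ → ℝ := Set.indicator (Icc (0:ℝ) 2) (fun _ => (1:ℝ)) with hg₀
  have hg₀int : Integrable g₀ :=
    (integrable_indicator_iff measurableSet_Icc).2
      (integrableOn_const (by rw [Real.volume_Icc]; exact ENNReal.ofReal_ne_top))
  have hg₀pos : ∀ x, 0 ≤ g₀ x := fun x => Set.indicator_nonneg (fun _ _ => zero_le_one) x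
  have hg₀I : ∫ x, g₀ x = 2 := by
    rw [hg₀, integral_indicator measurableSet_Icc, setIntegral_const, Real.volume_real_Icc_of_le (by norm_num), smul_eq_mul]
    norm_num
  have hval : ∀ t ∈ Icc (0:ℝ) 1, ∫ x, g₀ x * g₀ (x + t) = 2 - t := by
    rintro t ⟨ht0, ht1⟩
    have hpt : (fun x => g₀ x * g₀ (x + t))
        = Set.indicator (Icc (0:ℝ) (2 - t)) (fun _ => (1:ℝ)) := by
      funext x
      simp only [hg₀, Set.indicator, mem_Icc]
      by_cases hx1 : 0 ≤ x
      · by_cases hx2 : x ≤ 2 - t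
        · rw [if_pos ⟨hx1, by linarith⟩, if_pos ⟨by linarith, by linarith⟩, if_pos ⟨hx1, hx2⟩]
          norm_num
        · rw [if_neg (show ¬(0 ≤ x + t ∧ x + t ≤ 2) from fun h => by
              push_neg at hx2; linarith [h.2]), mul_zero,
            if_neg (fun h => hx2 h.2)]
      · rw [if_neg (fun h => hx1 h.1), zero_mul, if_neg (fun h => hx1 h.1)]
    rw [hpt, integral_indicator measurableSet_Icc, setIntegral_const, Real.volume_real_Icc_of_le (by linarith), smul_eq_mul]
    ring
  have hg₀sinf : (1:ℝ) ≤ sInf ((fun t => ∫ x, g₀ x * g₀ (x + t)) '' Icc (0:ℝ) 1) := by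
    refine le_csInf ⟨_, ⟨0, by norm_num, rfl⟩⟩ ?_
    rintro y ⟨t, ht, rfl⟩
    show (1:ℝ) ≤ ∫ x, g₀ x * g₀ (x + t)
    rw [hval t ht]
    rw [mem_Icc] at ht
    linarith [ht.2]
  have hmax' := hmax g₀ hg₀int hg₀pos
  rw [hg₀I] at hmax'
  norm_num at hmax'
  have hI2 : (0:ℝ) < I^2 := pow_pos hnorm 2
  have hr : N / I^2 ≤ 0 := div_nonpos_iff.2 (Or.inr ⟨hN0, hI2.le⟩)
  linarith [hg₀sinf, hr, hmax']


theorem maximizer_maximin_le_minimax (f : ℝ → ℝ)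
    (hcont : Continuous f) (hf : Integrable f) (hpos : ∀ x, 0 ≤ f x)
    (hnorm : 0 < ∫ x, f x)
    (hmax : ∀ g : ℝ → ℝ, Integrable g → (∀ x, 0 ≤ g x) →
      sInf ((fun t => ∫ x, g x * g (x + t)) '' Icc (0:ℝ) 1) / (∫ x, g x)^2
        ≤ sInf ((fun t => ∫ x, f x * f (x + t)) '' Icc (0:ℝ) 1) / (∫ x, f x)^2) :
    sSup (Set.range (fun x₁ => sInf ((fun t => f (x₁ - t) + f (x₁ + t)) '' Icc (0:ℝ) 1)))
      ≤ sInf ((fun x₂ => sSup ((fun t => f (x₂ - t) + f (x₂ + t)) '' Icc (0:ℝ) 1)) ''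
          tsupport f) := by
  by_cases hint : ∀ t ∈ Icc (0:ℝ) 1, Integrable (fun x => f x * f (x + t))
  · have hne : (tsupport f).Nonempty := by
      by_contra hemp
      rw [Set.not_nonempty_iff_eq_empty] at hemp
      have hz : f = 0 := by
        funext x
        exact image_eq_zero_of_notMem_tsupport (by simp [hemp])
      rw [hz] at hnorm
      simp at hnorm
    have h2 : 2 * sInf ((fun t => ∫ x, f x * f (x + t)) '' Icc (0:ℝ) 1) / (∫ x, f x)
        ≤ sInf ((fun x₂ => sSup ((fun t => f (x₂ - t) + f (x₂ + t)) '' Icc (0:ℝ) 1)) ''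
          tsupport f) := by
      refine le_csInf (hne.image _) ?_
      rintro y ⟨x₂, hx₂, rfl⟩
      exact claim2 f hcont hf hpos hnorm hint hmax x₂ hx₂
    refine le_trans (csSup_le (Set.range_nonempty _) ?_) h2
    rintro y ⟨x₁, rfl⟩
    exact claim1 f hcont hf hpos hnorm hint hmax x₁
  · push_neg at hint
    obtain ⟨t₀, ht₀, hni⟩ := hint
    exact (degenerate_case f hpos hnorm hmax t₀ ht₀ hni).elim
end

section
/- If a continuous nonnegative integrable f : ℝ → ℝ with ‖f‖_{L¹} > 0 maximizes F(f) = (min_{t∈[0,1]} ∫_ℝ f(x)f(x+t) dx)/‖f‖_{L¹}², then for every x₁ ∈ ℝ, min_{t∈[0,1]} [f(x₁−t) + f(x₁+t)] ≤ (2/‖f‖_{L¹})·min_{t∈[0,1]} ∫_ℝ f(x) f(x+t) dx. -/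
open MeasureTheory Set

lemma ind_integrable (a b : ℝ) : Integrable ((Icc a b).indicator (fun _ => (1:ℝ))) := by
  rw [integrable_indicator_iff measurableSet_Icc]
  exact integrableOn_const measure_Icc_lt_top.ne

lemma ind_integral (a b : ℝ) (h : a ≤ b) :
    ∫ x, (Icc a b).indicator (fun _ => (1:ℝ)) x = b - a := by
  rw [integral_indicator measurableSet_Icc, setIntegral_const, measureReal_def, Real.volume_Icc,
    smul_eq_mul, mul_one, ENNReal.toReal_ofReal (by linarith)]

theorem maximizer_first_condition (f : ℝ → ℝ)
    (hcont : Continuous f) (hf : Integrable f) (hpos : ∀ x, 0 ≤ f x)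
    (hnorm : 0 < ∫ x, f x)
    (hmax : ∀ g : ℝ → ℝ, Integrable g → (∀ x, 0 ≤ g x) →
      sInf ((fun t => ∫ x, g x * g (x + t)) '' Icc (0:ℝ) 1) / (∫ x, g x)^2
        ≤ sInf ((fun t => ∫ x, f x * f (x + t)) '' Icc (0:ℝ) 1) / (∫ x, f x)^2) :
    ∀ x₁ : ℝ, sInf ((fun t => f (x₁ - t) + f (x₁ + t)) '' Icc (0:ℝ) 1)
      ≤ (2 / ∫ x, f x) * sInf ((fun t => ∫ x, f x * f (x + t)) '' Icc (0:ℝ) 1) := by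
  intro x₁
  set N := ∫ x, f x with hN
  set S := (fun t => ∫ x, f x * f (x + t)) '' Icc (0:ℝ) 1 with hS
  set M := sInf S with hM
  have hSne : S.Nonempty := ⟨_, mem_image_of_mem _ (by norm_num : (0:ℝ) ∈ Icc (0:ℝ) 1)⟩
  have hSnn : ∀ v ∈ S, (0:ℝ) ≤ v := by
    rintro v ⟨t, ht, rfl⟩
    exact integral_nonneg fun x => mul_nonneg (hpos x) (hpos (x + t))
  have hSbdd : BddBelow S := ⟨0, hSnn⟩
  -- Step 1 : M ≥ N²/4
  have hM4 : N^2/4 ≤ M := by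
    set g₀ : ℝ → ℝ := (Icc (0:ℝ) 2).indicator (fun _ => (1:ℝ)) with hg₀
    have hg₀int : Integrable g₀ := ind_integrable 0 2
    have hg₀nn : ∀ x, 0 ≤ g₀ x := fun x => indicator_nonneg (fun _ _ => zero_le_one) x
    have hg₀N : ∫ x, g₀ x = 2 := by
      rw [hg₀, ind_integral 0 2 (by norm_num)]; norm_num
    have hval : ∀ t ∈ Icc (0:ℝ) 1, ∫ x, g₀ x * g₀ (x + t) = 2 - t := by
      intro t ht
      obtain ⟨ht0, ht1⟩ := ht
      have heq : (fun x => g₀ x * g₀ (x + t))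
          = (Icc (0:ℝ) (2 - t)).indicator (fun _ => (1:ℝ)) := by
        funext x
        by_cases h3 : x ∈ Icc (0:ℝ) (2 - t)
        · have h1 : x ∈ Icc (0:ℝ) 2 := ⟨h3.1, by linarith [h3.2]⟩
          have h2 : x + t ∈ Icc (0:ℝ) 2 := ⟨by linarith [h3.1], by linarith [h3.2]⟩
          rw [hg₀, indicator_of_mem h1, indicator_of_mem h2, indicator_of_mem h3]
          norm_num
        · have hor : x ∉ Icc (0:ℝ) 2 ∨ x + t ∉ Icc (0:ℝ) 2 := by
            by_contra hc; push_neg at hc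
            exact h3 ⟨hc.1.1, by linarith [hc.2.2]⟩
          rw [indicator_of_notMem h3]
          rcases hor with h | h <;> rw [hg₀] <;>
            [rw [indicator_of_notMem h, zero_mul]; rw [indicator_of_notMem h, mul_zero]]
      rw [heq, ind_integral 0 (2 - t) (by linarith)]
      ring
    have hS0 : (1:ℝ) ≤ sInf ((fun t => ∫ x, g₀ x * g₀ (x + t)) '' Icc (0:ℝ) 1) := by
      refine le_csInf (⟨_, mem_image_of_mem _ (by norm_num : (0:ℝ) ∈ Icc (0:ℝ) 1)⟩ :
        Set.Nonempty _) ?_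
      rintro v ⟨t, ht, rfl⟩
      simp only
      rw [hval t ht]; linarith [ht.2]
    have h := hmax g₀ hg₀int hg₀nn
    rw [hg₀N] at h
    have hN2 : (0:ℝ) < N^2 := by positivity
    rw [div_le_div_iff₀ (by norm_num) hN2] at h
    nlinarith [hS0, h]
  have hMpos : 0 < M := lt_of_lt_of_le (by positivity) hM4
  -- Step 2 : integrability of the self-correlation
  have hint : ∀ t ∈ Icc (0:ℝ) 1, Integrable (fun x => f x * f (x + t)) := by
    intro t ht
    by_contra hni
    have h0 : ∫ x, f x * f (x + t) = 0 := integral_undef hni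
    have : M ≤ 0 := h0 ▸ csInf_le hSbdd (mem_image_of_mem _ ht)
    linarith
  -- Setup for the perturbation argument
  set L := sInf ((fun t => f (x₁ - t) + f (x₁ + t)) '' Icc (0:ℝ) 1) with hL
  have hLbdd : BddBelow ((fun t => f (x₁ - t) + f (x₁ + t)) '' Icc (0:ℝ) 1) := by
    refine ⟨0, ?_⟩
    rintro v ⟨t, ht, rfl⟩
    exact add_nonneg (hpos _) (hpos _)
  -- uniform continuity on [x₁-2, x₁+2]
  have huc : UniformContinuousOn f (Icc (x₁ - 2) (x₁ + 2)) :=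
    isCompact_Icc.uniformContinuousOn_of_continuous hcont.continuousOn
  have key : ∀ δ : ℝ, 0 < δ → L ≤ 2/N*M + δ := by
    intro δ hδ
    obtain ⟨η, hη, hucη⟩ := Metric.uniformContinuousOn_iff.1 huc (δ/4) (by linarith)
    have hMpos' : (0:ℝ) < M + 1 := by linarith
    have hεex : ∃ ε : ℝ, 0 < ε ∧ ε ≤ 1 ∧ ε ≤ η ∧ ε^2 ≤ δ*N^2/(2*(M+1)) := by
      have hsq : 0 < δ*N^2/(2*(M+1)) := by positivity
      refine ⟨min (min 1 η) (Real.sqrt (δ*N^2/(2*(M+1)))), ?_, ?_, ?_, ?_⟩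
      · exact lt_min (lt_min one_pos hη) (Real.sqrt_pos.2 hsq)
      · exact le_trans (min_le_left _ _) (min_le_left _ _)
      · exact le_trans (min_le_left _ _) (min_le_right _ _)
      · have h1 : min (min 1 η) (Real.sqrt (δ*N^2/(2*(M+1)))) ≤
            Real.sqrt (δ*N^2/(2*(M+1))) := min_le_right _ _
        have h0 : 0 ≤ min (min 1 η) (Real.sqrt (δ*N^2/(2*(M+1)))) :=
          (lt_min (lt_min one_pos hη) (Real.sqrt_pos.2 hsq)).le
        calc (min (min 1 η) (Real.sqrt (δ*N^2/(2*(M+1)))))^2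
            ≤ (Real.sqrt (δ*N^2/(2*(M+1))))^2 := by apply pow_le_pow_left₀ h0 h1
          _ = δ*N^2/(2*(M+1)) := Real.sq_sqrt hsq.le
    obtain ⟨ε, hεpos, hε1, hεη, hεsq⟩ := hεex
    have hMε : M*ε^2 ≤ δ*N^2/2 := by
      have hM1 : (0:ℝ) < M + 1 := hMpos'
      calc M*ε^2 ≤ (M+1)*ε^2 := by nlinarith [sq_nonneg ε]
        _ ≤ (M+1)*(δ*N^2/(2*(M+1))) := by
              exact mul_le_mul_of_nonneg_left hεsq hM1.le
        _ = δ*N^2/2 := by field_simp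
    set J := Icc (x₁ - ε/2) (x₁ + ε/2) with hJ
    set g : ℝ → ℝ := fun x => f x + ε * J.indicator (fun _ => (1:ℝ)) x with hg
    have hJind : Integrable (fun x => ε * J.indicator (fun _ => (1:ℝ)) x) :=
      (ind_integrable _ _).const_mul ε
    have hgint : Integrable g := hf.add hJind
    have hgnn : ∀ x, 0 ≤ g x := fun x => add_nonneg (hpos x)
      (mul_nonneg hεpos.le (indicator_nonneg (fun _ _ => zero_le_one) x))
    have hgN : ∫ x, g x = N + ε^2 := by
      rw [hg]
      rw [integral_add hf hJind, integral_const_mul, ind_integral _ _ (by linarith)]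
      rw [← hN]; ring_nf
    -- per-t lower bound on the correlation of g
    have keyt : ∀ t ∈ Icc (0:ℝ) 1, M + ε^2*(L - δ/2) ≤ ∫ x, g x * g (x + t) := by
      intro t ht
      obtain ⟨ht0, ht1⟩ := ht
      set I₁ := Icc (x₁ - t - ε/2) (x₁ - t + ε/2) with hI₁
      have hmem : ∀ x : ℝ, (x + t ∈ J) ↔ x ∈ I₁ := by
        intro x
        simp only [hJ, hI₁, mem_Icc]
        constructor <;> intro h <;> exact ⟨by linarith [h.1], by linarith [h.2]⟩
      have heq : (fun x => g x * g (x + t)) = fun x =>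
          f x * f (x + t) + ε * (I₁.indicator f x)
          + ε * (J.indicator (fun y => f (y + t)) x)
          + ε^2 * ((J ∩ I₁).indicator (fun _ => (1:ℝ)) x) := by
        funext x
        rw [hg]
        simp only
        by_cases hx1 : x ∈ J <;> by_cases hx2 : x ∈ I₁
        · rw [indicator_of_mem hx1, indicator_of_mem ((hmem x).2 hx2),
            indicator_of_mem hx1, indicator_of_mem hx2,
            indicator_of_mem (mem_inter hx1 hx2)]
          ring
        · rw [indicator_of_mem hx1, indicator_of_notMem (fun h => hx2 ((hmem x).1 h)),
            indicator_of_mem hx1, indicator_of_notMem hx2,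
            indicator_of_notMem (fun h => hx2 h.2)]
          ring
        · rw [indicator_of_notMem hx1, indicator_of_mem ((hmem x).2 hx2),
            indicator_of_notMem hx1, indicator_of_mem hx2,
            indicator_of_notMem (fun h => hx1 h.1)]
          ring
        · rw [indicator_of_notMem hx1, indicator_of_notMem (fun h => hx2 ((hmem x).1 h)),
            indicator_of_notMem hx1, indicator_of_notMem hx2,
            indicator_of_notMem (fun h => hx1 h.1)]
          ring
      have hi1 : Integrable (I₁.indicator f) := hf.indicator measurableSet_Icc
      have hi2 : Integrable (J.indicator (fun y => f (y + t))) :=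
        (hf.comp_add_right t).indicator measurableSet_Icc
      have hi3 : Integrable ((J ∩ I₁).indicator (fun _ => (1:ℝ))) := by
        rw [hJ, hI₁, Icc_inter_Icc]
        exact ind_integrable _ _
      have hsplit : ∫ x, g x * g (x + t)
          = (∫ x, f x * f (x + t)) + ε * (∫ x, I₁.indicator f x)
            + ε * (∫ x, J.indicator (fun y => f (y + t)) x)
            + ε^2 * (∫ x, (J ∩ I₁).indicator (fun _ => (1:ℝ)) x) := by
        have hA : Integrable (fun x => f x * f (x + t)) := hint t ⟨ht0, ht1⟩
        have hB : Integrable (fun x => ε * I₁.indicator f x) := hi1.const_mul ε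
        have hC : Integrable (fun x => ε * J.indicator (fun y => f (y + t)) x) :=
          hi2.const_mul ε
        have hD : Integrable (fun x => ε^2 * (J ∩ I₁).indicator (fun _ => (1:ℝ)) x) :=
          hi3.const_mul (ε^2)
        have hAB : Integrable (fun x => f x * f (x + t) + ε * I₁.indicator f x) := hA.add hB
        have hABC : Integrable (fun x => f x * f (x + t) + ε * I₁.indicator f x
            + ε * J.indicator (fun y => f (y + t)) x) := hAB.add hC
        rw [heq, integral_add hABC hD, integral_add hAB hC, integral_add hA hB,
          integral_const_mul, integral_const_mul, integral_const_mul]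
      -- bounds
      have hb0 : M ≤ ∫ x, f x * f (x + t) := csInf_le hSbdd (mem_image_of_mem _ ⟨ht0, ht1⟩)
      have hconstI : ∀ (a : ℝ) (c : ℝ), ∫ x in Icc (a - ε/2) (a + ε/2), c = c * ε := by
        intro a c
        rw [setIntegral_const, measureReal_def, Real.volume_Icc, smul_eq_mul,
          ENNReal.toReal_ofReal (by linarith : (0:ℝ) ≤ a + ε/2 - (a - ε/2))]
        ring_nf
      have hclose : ∀ y z : ℝ, y ∈ Icc (x₁ - 2) (x₁ + 2) → z ∈ Icc (x₁ - 2) (x₁ + 2) →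
          |y - z| ≤ ε/2 → f z - δ/4 ≤ f y := by
        intro y z hy hz hd
        have : dist y z < η := by
          rw [Real.dist_eq]
          calc |y - z| ≤ ε/2 := hd
            _ < η := by linarith
        have := hucη y hy z hz this
        rw [Real.dist_eq] at this
        have := abs_lt.1 this
        linarith [this.1]
      have hb1 : ε * (f (x₁ - t) - δ/4) ≤ ∫ x, I₁.indicator f x := by
        rw [integral_indicator measurableSet_Icc]
        have : ∫ x in I₁, (f (x₁ - t) - δ/4) ≤ ∫ x in I₁, f x := by
          apply setIntegral_mono_on (integrableOn_const measure_Icc_lt_top.ne)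
            hf.integrableOn measurableSet_Icc
          intro x hx
          apply hclose x (x₁ - t) ⟨by linarith [hx.1], by linarith [hx.2]⟩
            ⟨by linarith, by linarith⟩
          rw [abs_le]
          constructor <;> [linarith [hx.1]; linarith [hx.2]]
        rw [hI₁] at this
        rw [hconstI (x₁ - t) (f (x₁ - t) - δ/4)] at this
        linarith [this]
      have hb2 : ε * (f (x₁ + t) - δ/4) ≤ ∫ x, J.indicator (fun y => f (y + t)) x := by
        rw [integral_indicator measurableSet_Icc]
        have : ∫ x in J, (f (x₁ + t) - δ/4) ≤ ∫ x in J, f (x + t) := by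
          apply setIntegral_mono_on (integrableOn_const measure_Icc_lt_top.ne)
            (hf.comp_add_right t).integrableOn measurableSet_Icc
          intro x hx
          apply hclose (x + t) (x₁ + t) ⟨by linarith [hx.1], by linarith [hx.2]⟩
            ⟨by linarith, by linarith⟩
          rw [abs_le]
          constructor <;> [linarith [hx.1]; linarith [hx.2]]
        rw [hJ] at this
        rw [hconstI x₁ (f (x₁ + t) - δ/4)] at this
        linarith [this]
      have hb3 : 0 ≤ ∫ x, (J ∩ I₁).indicator (fun _ => (1:ℝ)) x :=
        integral_nonneg (indicator_nonneg (fun _ _ => zero_le_one))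
      have hLle : L ≤ f (x₁ - t) + f (x₁ + t) :=
        csInf_le hLbdd (mem_image_of_mem _ ⟨ht0, ht1⟩)
      rw [hsplit]
      nlinarith [hb0, hb1, hb2, hb3, hLle, hεpos, sq_nonneg ε,
        mul_le_mul_of_nonneg_left hb1 hεpos.le, mul_le_mul_of_nonneg_left hb2 hεpos.le,
        mul_le_mul_of_nonneg_left hb3 (sq_nonneg ε)]
    -- apply hmax to g
    have hg_inf : M + ε^2*(L - δ/2) ≤ sInf ((fun t => ∫ x, g x * g (x + t)) '' Icc (0:ℝ) 1) := by
      refine le_csInf (⟨_, mem_image_of_mem _ (by norm_num : (0:ℝ) ∈ Icc (0:ℝ) 1)⟩ :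
        Set.Nonempty _) ?_
      rintro v ⟨t, ht, rfl⟩
      exact keyt t ht
    have h := hmax g hgint hgnn
    rw [hgN] at h
    have hNε : (0:ℝ) < (N + ε^2)^2 := by positivity
    have hN2 : (0:ℝ) < N^2 := by positivity
    rw [div_le_div_iff₀ hNε hN2] at h
    have hA : (M + ε^2*(L - δ/2)) * N^2 ≤ M * (N + ε^2)^2 :=
      le_trans (mul_le_mul_of_nonneg_right hg_inf hN2.le) h
    have hMε4 : M*ε^4 ≤ δ/2*N^2*ε^2 := by
      have h' := mul_le_mul_of_nonneg_right hMε (sq_nonneg ε)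
      calc M*ε^4 = M*ε^2*ε^2 := by ring
        _ ≤ δ*N^2/2*ε^2 := h'
        _ = δ/2*N^2*ε^2 := by ring
    have hc : (0:ℝ) < ε^2*N^2 := by positivity
    have h6 : (L - δ/2 - 2*M/N)*(ε^2*N^2) ≤ (δ/2)*(ε^2*N^2) := by
      have hNne : N ≠ 0 := ne_of_gt hnorm
      have hdiv2 : (2*M/N)*(ε^2*N^2) = 2*M*N*ε^2 := by field_simp
      linarith [hA, hMε4, hdiv2]
    have h7 : L - δ/2 - 2*M/N ≤ δ/2 := (mul_le_mul_iff_of_pos_right hc).1 h6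
    have : 2/N*M = 2*M/N := by ring
    linarith [h7]
  exact le_of_forall_pos_le_add key
end

section
/- Let f : ℝ → ℝ be continuous and integrable, x₁ ∈ ℝ, g_ε = ε·χ_{[x₁−ε/2,x₁+ε/2]}. Then the perturbed autocorrelation expands as ∫_ℝ (f+g_ε)(x)(f+g_ε)(x+t) dx = ∫_ℝ f(x)f(x+t) dx + ε²·[f(x₁−t) + f(x₁+t)] + o(ε²), uniformly for t in [0,1]. -/
open MeasureTheory Set Filter

lemma err_bound (f : ℝ → ℝ) (hcont : Continuous f) (hf : Integrable f) (M : ℝ)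
    (hbd : ∀ x, |f x| ≤ M) (x₁ c ε t : ℝ) (hε : 0 < ε) (hε1 : ε ≤ 1)
    (ht : t ∈ Icc (0:ℝ) 1)
    (hUC : ∀ a ∈ Icc (x₁-2) (x₁+2), ∀ b ∈ Icc (x₁-2) (x₁+2), |a - b| ≤ ε/2 → |f a - f b| ≤ c) :
    |(∫ x, (f x + (Icc (x₁ - ε/2) (x₁ + ε/2)).indicator (fun _ => ε) x) *
          (f (x + t) + (Icc (x₁ - ε/2) (x₁ + ε/2)).indicator (fun _ => ε) (x + t)))
      - (∫ x, f x * f (x + t))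
      - ε^2 * (f (x₁ - t) + f (x₁ + t))| ≤ ε^2 * (2*c + ε) := by
  obtain ⟨ht0, ht1⟩ := ht
  set I : Set ℝ := Icc (x₁ - ε/2) (x₁ + ε/2) with hI
  set J : Set ℝ := Icc (x₁ - t - ε/2) (x₁ - t + ε/2) with hJ
  set g : ℝ → ℝ := I.indicator (fun _ => ε) with hg
  have hgm : AEStronglyMeasurable g volume :=
    ((measurable_const.indicator measurableSet_Icc)).aestronglyMeasurable
  have hgb : ∀ x, ‖g x‖ ≤ ε := by
    intro x
    rw [Real.norm_eq_abs, hg]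
    by_cases h : x ∈ I
    · simp [Set.indicator_of_mem h, abs_of_pos hε]
    · simp [Set.indicator_of_notMem h, hε.le]
  have hfb : ∃ C, ∀ x, ‖f x‖ ≤ C := ⟨M, fun x => by simpa using hbd x⟩
  have hgi : Integrable g :=
    (integrable_indicator_iff measurableSet_Icc).2 (integrableOn_const measure_Icc_lt_top.ne)
  have hft : Integrable (fun x => f (x + t)) := hf.comp_add_right t
  have hgt : Integrable (fun x => g (x + t)) := hgi.comp_add_right t
  have h1 : Integrable (fun x => f x * f (x + t)) :=
    hft.bdd_mul hcont.aestronglyMeasurable (ae_of_all _ hfb.choose_spec)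
  have h2 : Integrable (fun x => g x * f (x + t)) := hft.bdd_mul hgm (ae_of_all _ hgb)
  have h3 : Integrable (fun x => f x * g (x + t)) := hgt.bdd_mul hcont.aestronglyMeasurable (ae_of_all _ hfb.choose_spec)
  have h4 : Integrable (fun x => g x * g (x + t)) := hgt.bdd_mul hgm (ae_of_all _ hgb)
  -- expansion
  have hexp : (∫ x, (f x + g x) * (f (x + t) + g (x + t)))
      = (∫ x, f x * f (x + t)) + ((∫ x, g x * f (x + t)) + ((∫ x, f x * g (x + t))
        + (∫ x, g x * g (x + t)))) := by
    have heq : (fun x => (f x + g x) * (f (x + t) + g (x + t)))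
        = fun x => f x * f (x + t) + (g x * f (x + t) + (f x * g (x + t) + g x * g (x + t))) := by
      funext x; ring
    have e34 : (∫ x, (f x * g (x + t) + g x * g (x + t)))
        = (∫ x, f x * g (x + t)) + (∫ x, g x * g (x + t)) := integral_add h3 h4
    have e234 : (∫ x, (g x * f (x + t) + (f x * g (x + t) + g x * g (x + t))))
        = (∫ x, g x * f (x + t)) + ∫ x, (f x * g (x + t) + g x * g (x + t)) :=
      integral_add h2 (h3.add h4)
    have e1234 : (∫ x, (f x * f (x + t) + (g x * f (x + t) + (f x * g (x + t) + g x * g (x + t)))))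
        = (∫ x, f x * f (x + t))
          + ∫ x, (g x * f (x + t) + (f x * g (x + t) + g x * g (x + t))) :=
      integral_add h1 (h2.add (h3.add h4))
    rw [heq, e1234, e234, e34]
  have volI : (volume I).toReal = ε := by
    rw [hI, Real.volume_Icc, show x₁ + ε/2 - (x₁ - ε/2) = ε by ring, ENNReal.toReal_ofReal hε.le]
  have volJ : (volume J).toReal = ε := by
    rw [hJ, Real.volume_Icc, show x₁ - t + ε/2 - (x₁ - t - ε/2) = ε by ring,
      ENNReal.toReal_ofReal hε.le]
  -- key2
  have key2 : |(∫ x, g x * f (x + t)) - ε^2 * f (x₁ + t)| ≤ ε^2 * c := by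
    have e2 : (∫ x, g x * f (x + t)) = ε * ∫ x in I, f (x + t) := by
      have : (fun x => g x * f (x + t)) = I.indicator (fun x => ε * f (x + t)) := by
        funext x
        exact (Set.indicator_mul_left I (fun _ => ε) (fun x => f (x + t))).symm
      rw [this, integral_indicator measurableSet_Icc, integral_const_mul ε _]
    have e2c : (∫ x in I, f (x₁ + t)) = ε * f (x₁ + t) := by
      rw [setIntegral_const, measureReal_def, volI, smul_eq_mul]
    have hdiff : |∫ x in I, (f (x + t) - f (x₁ + t))| ≤ c * ε := by
      have hb : ∀ x ∈ I, ‖f (x + t) - f (x₁ + t)‖ ≤ c := by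
        intro x hx
        obtain ⟨hx1, hx2⟩ := hx
        rw [Real.norm_eq_abs]
        apply hUC
        · constructor <;> [linarith; linarith]
        · constructor <;> [linarith; linarith]
        · rw [abs_le]; constructor <;> [linarith; linarith]
      have hm : AEStronglyMeasurable (fun x => f (x + t) - f (x₁ + t)) (volume.restrict I) :=
        (((hcont.comp (continuous_id.add continuous_const)).sub
          continuous_const).aestronglyMeasurable).restrict
      have := norm_setIntegral_le_of_norm_le_const (μ := volume) (s := I)
        measure_Icc_lt_top hb
      rwa [measureReal_def, volI, Real.norm_eq_abs] at this
    have hsub : (∫ x in I, (f (x + t) - f (x₁ + t)))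
        = (∫ x in I, f (x + t)) - (∫ x in I, f (x₁ + t)) :=
      integral_sub hft.integrableOn (integrableOn_const measure_Icc_lt_top.ne)
    rw [e2, show ε^2 * f (x₁ + t) = ε * (ε * f (x₁ + t)) by ring, ← e2c, ← mul_sub, abs_mul,
      abs_of_pos hε, ← hsub]
    calc ε * |∫ x in I, (f (x + t) - f (x₁ + t))| ≤ ε * (c * ε) := by
          exact mul_le_mul_of_nonneg_left hdiff hε.le
      _ = ε^2 * c := by ring
  -- key3
  have key3 : |(∫ x, f x * g (x + t)) - ε^2 * f (x₁ - t)| ≤ ε^2 * c := by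
    have hmem : ∀ x : ℝ, x + t ∈ I ↔ x ∈ J := by
      intro x
      simp only [hI, hJ, mem_Icc]
      constructor <;> intro h <;> constructor <;> linarith [h.1, h.2]
    have e3 : (∫ x, f x * g (x + t)) = (∫ x in J, f x) * ε := by
      have : (fun x => f x * g (x + t)) = J.indicator (fun x => f x * ε) := by
        funext x
        by_cases h : x ∈ J
        · rw [Set.indicator_of_mem h, hg, Set.indicator_of_mem ((hmem x).2 h)]
        · rw [Set.indicator_of_notMem h, hg,
            Set.indicator_of_notMem (fun hc => h ((hmem x).1 hc)), mul_zero]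
      rw [this, integral_indicator measurableSet_Icc, integral_mul_const ε _]
    have e3c : (∫ x in J, f (x₁ - t)) = ε * f (x₁ - t) := by
      rw [setIntegral_const, measureReal_def, volJ, smul_eq_mul]
    have hdiff : |∫ x in J, (f x - f (x₁ - t))| ≤ c * ε := by
      have hb : ∀ x ∈ J, ‖f x - f (x₁ - t)‖ ≤ c := by
        intro x hx
        obtain ⟨hx1, hx2⟩ := hx
        rw [Real.norm_eq_abs]
        apply hUC
        · constructor <;> [linarith; linarith]
        · constructor <;> [linarith; linarith]
        · rw [abs_le]; constructor <;> [linarith; linarith]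
      have hm : AEStronglyMeasurable (fun x => f x - f (x₁ - t)) (volume.restrict J) :=
        ((hcont.sub continuous_const).aestronglyMeasurable).restrict
      have := norm_setIntegral_le_of_norm_le_const (μ := volume) (s := J)
        measure_Icc_lt_top hb
      rwa [measureReal_def, volJ, Real.norm_eq_abs] at this
    have hsub : (∫ x in J, (f x - f (x₁ - t)))
        = (∫ x in J, f x) - (∫ x in J, f (x₁ - t)) :=
      integral_sub hf.integrableOn (integrableOn_const measure_Icc_lt_top.ne)
    rw [e3, show ε^2 * f (x₁ - t) = (ε * f (x₁ - t)) * ε by ring, ← e3c, ← sub_mul, abs_mul,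
      abs_of_pos hε, ← hsub]
    calc |∫ x in J, (f x - f (x₁ - t))| * ε ≤ (c * ε) * ε := by
          exact mul_le_mul_of_nonneg_right hdiff hε.le
      _ = ε^2 * c := by ring
  -- key4
  have key4 : |∫ x, g x * g (x + t)| ≤ ε^2 * ε := by
    have e4 : (∫ x, g x * g (x + t)) = ∫ x in I, ε * g (x + t) := by
      have : (fun x => g x * g (x + t)) = I.indicator (fun x => ε * g (x + t)) := by
        funext x
        exact (Set.indicator_mul_left I (fun _ => ε) (fun x => g (x + t))).symm
      rw [this, integral_indicator measurableSet_Icc]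
    have hb : ∀ x ∈ I, ‖ε * g (x + t)‖ ≤ ε * ε := by
      intro x _
      rw [norm_mul, Real.norm_eq_abs (ε), abs_of_pos hε]
      exact mul_le_mul_of_nonneg_left (hgb (x + t)) hε.le
    have hm : AEStronglyMeasurable (fun x => ε * g (x + t)) (volume.restrict I) :=
      (hgt.aestronglyMeasurable.const_mul ε).restrict
    have := norm_setIntegral_le_of_norm_le_const (μ := volume) (s := I)
      measure_Icc_lt_top hb
    rw [measureReal_def, volI, Real.norm_eq_abs] at this
    calc |∫ x, g x * g (x + t)| = |∫ x in I, ε * g (x + t)| := by rw [e4]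
      _ ≤ ε * ε * ε := this
      _ = ε^2 * ε := by ring
  -- combine
  have hrw : (∫ x, (f x + g x) * (f (x + t) + g (x + t))) - (∫ x, f x * f (x + t))
      - ε^2 * (f (x₁ - t) + f (x₁ + t))
      = ((∫ x, g x * f (x + t)) - ε^2 * f (x₁ + t))
        + (((∫ x, f x * g (x + t)) - ε^2 * f (x₁ - t)) + (∫ x, g x * g (x + t))) := by
    rw [hexp]; ring
  calc |(∫ x, (f x + g x) * (f (x + t) + g (x + t))) - (∫ x, f x * f (x + t))
      - ε^2 * (f (x₁ - t) + f (x₁ + t))|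
      = |((∫ x, g x * f (x + t)) - ε^2 * f (x₁ + t))
        + (((∫ x, f x * g (x + t)) - ε^2 * f (x₁ - t)) + (∫ x, g x * g (x + t)))| := by rw [hrw]
    _ ≤ |(∫ x, g x * f (x + t)) - ε^2 * f (x₁ + t)|
        + (|(∫ x, f x * g (x + t)) - ε^2 * f (x₁ - t)| + |∫ x, g x * g (x + t)|) :=
      (abs_add_le _ _).trans (by gcongr; exact abs_add_le _ _)
    _ ≤ ε^2 * c + (ε^2 * c + ε^2 * ε) := by gcongr
    _ = ε^2 * (2*c + ε) := by ring

theorem perturbed_autocorr_expansion (f : ℝ → ℝ) (hcont : Continuous f)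
    (hf : Integrable f) (M : ℝ) (hbd : ∀ x, |f x| ≤ M) (x₁ : ℝ) :
    Tendsto (fun ε : ℝ => sSup ((fun t =>
        |(∫ x, (f x + (Icc (x₁ - ε/2) (x₁ + ε/2)).indicator (fun _ => ε) x) *
              (f (x + t) + (Icc (x₁ - ε/2) (x₁ + ε/2)).indicator (fun _ => ε) (x + t)))
          - (∫ x, f x * f (x + t))
          - ε^2 * (f (x₁ - t) + f (x₁ + t))| / ε^2) '' Icc (0:ℝ) 1))
      (nhdsWithin 0 (Ioi 0)) (nhds 0) := by
  rw [Metric.tendsto_nhdsWithin_nhds]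
  intro δ hδ
  have hUC := (isCompact_Icc (a := x₁ - 2) (b := x₁ + 2)).uniformContinuousOn_of_continuous
    hcont.continuousOn
  rw [Metric.uniformContinuousOn_iff] at hUC
  obtain ⟨η₁, hη₁, hUC⟩ := hUC (δ/4) (by linarith)
  refine ⟨min η₁ (min 1 (δ/4)), by positivity, ?_⟩
  intro ε hεpos hdist
  have hε0 : 0 < ε := hεpos
  rw [Real.dist_eq, sub_zero, abs_of_pos hε0] at hdist
  have hε1 : ε ≤ 1 := le_of_lt (lt_of_lt_of_le hdist ((min_le_right _ _).trans (min_le_left _ _)))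
  have hεη : ε < η₁ := lt_of_lt_of_le hdist (min_le_left _ _)
  have hεδ : ε < δ/4 := lt_of_lt_of_le hdist ((min_le_right _ _).trans (min_le_right _ _))
  have hcb : ∀ a ∈ Icc (x₁-2) (x₁+2), ∀ b ∈ Icc (x₁-2) (x₁+2),
      |a - b| ≤ ε/2 → |f a - f b| ≤ δ/4 := by
    intro a ha b hb hab
    have := hUC a ha b hb (by rw [Real.dist_eq]; linarith)
    rw [Real.dist_eq] at this
    linarith
  set S := (fun t =>
        |(∫ x, (f x + (Icc (x₁ - ε/2) (x₁ + ε/2)).indicator (fun _ => ε) x) *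
              (f (x + t) + (Icc (x₁ - ε/2) (x₁ + ε/2)).indicator (fun _ => ε) (x + t)))
          - (∫ x, f x * f (x + t))
          - ε^2 * (f (x₁ - t) + f (x₁ + t))| / ε^2) '' Icc (0:ℝ) 1 with hS
  have hub : ∀ y ∈ S, y ≤ δ/2 + ε := by
    rintro _ ⟨t, ht, rfl⟩
    have hkey := err_bound f hcont hf M hbd x₁ (δ/4) ε t hε0 hε1 ht hcb
    rw [div_le_iff₀ (by positivity)]
    calc |(∫ x, (f x + (Icc (x₁ - ε/2) (x₁ + ε/2)).indicator (fun _ => ε) x) *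
              (f (x + t) + (Icc (x₁ - ε/2) (x₁ + ε/2)).indicator (fun _ => ε) (x + t)))
          - (∫ x, f x * f (x + t))
          - ε^2 * (f (x₁ - t) + f (x₁ + t))| ≤ ε^2 * (2*(δ/4) + ε) := hkey
      _ = (δ/2 + ε) * ε^2 := by ring
  have hne : S.Nonempty := ⟨_, Set.mem_image_of_mem _ (Set.left_mem_Icc.2 (by norm_num))⟩
  have hbdd : BddAbove S := ⟨δ/2 + ε, hub⟩
  have hsup_le : sSup S ≤ δ/2 + ε := csSup_le hne hub
  have h0le : 0 ≤ sSup S := by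
    obtain ⟨y, hy⟩ := hne
    refine le_trans ?_ (le_csSup hbdd hy)
    obtain ⟨t, _, rfl⟩ := hy
    positivity
  rw [Real.dist_eq, sub_zero, abs_of_nonneg h0le]
  linarith
end
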